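/- arXiv:math/0211080 — 4 statements merged into one kernel-verified Lean document; each statement's English description precedes it below -/
import Mathlib

section
/- Let ℓ ≥ 1, let {X, U_1,…,U_{ℓ+1}, V_1,…,V_{ℓ+1}, Y} be a basis of ℝ^{2ℓ+4}, and let c ∈ ℝ. Let g be the symmetric bilinear form with g(X,X) = c, g(X,Y) = 1, g(U_a,V_b) = δ_{ab}, all other products 0. Let R be the 4-linear form whose only nonzero components on the basis, up to the symmetries R(x_1,x_2,x_3,x_4) = −R(x_2,x_1,x_3,x_4) = −R(x_1,x_2,x_4,x_3) = R(x_3,x_4,x_1,x_2), are: R(X,U_1,U_1,X) = 1, and for each 2 ≤ a ≤ ℓ+1: R(X,U_a,U_a,X) = R(X,U_a,U_{a−1},X) = R(X,U_a,V_{a−1},X) = 1. Then: (i) g is nondegenerate of signature (ℓ+2,ℓ+2); (ii) J(ξ)^{2ℓ+2} = 0 for every ξ ∈ ℝ^{2ℓ+4}; (iii) there exists ξ_0 with J(ξ_0)^{2ℓ+1} ≠ 0. -/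
set_option maxHeartbeats 1600000 in
/-- the even-order Osserman example. On `ℝ^{2ℓ+4}` with basis
`X = b 0`, `U_a = b a` (`1 ≤ a ≤ ℓ+1`), `V_a = b (ℓ+1+a)` (`1 ≤ a ≤ ℓ+1`), `Y = b (2ℓ+3)`,
take `g(X,X) = c`, `g(X,Y) = 1`, `g(U_a,V_b) = δ_{ab}`, all other products `0`, and the
4-linear form `R` whose only nonzero components up to the usual symmetries are
`R(X,U₁,U₁,X) = 1` and, for `2 ≤ a ≤ ℓ+1`,
`R(X,U_a,U_a,X) = R(X,U_a,U_{a-1},X) = R(X,U_a,V_{a-1},X) = 1`. Then `g` has signature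
`(ℓ+2,ℓ+2)`, and the Jacobi operator satisfies `J(ξ)^{2ℓ+2} = 0` for all `ξ` while
`J(ξ₀)^{2ℓ+1} ≠ 0` for some `ξ₀`. -/
theorem osserman_nilpotent_even_order (l : ℕ) (hl : 1 ≤ l)
    (b : Module.Basis (Fin (2 * l + 4)) ℝ (Fin (2 * l + 4) → ℝ)) (c : ℝ)
    (g : (Fin (2 * l + 4) → ℝ) →ₗ[ℝ] (Fin (2 * l + 4) → ℝ) →ₗ[ℝ] ℝ)
    (hgsym : ∀ v w, g v w = g w v)
    (hgXX : g (b ⟨0, by omega⟩) (b ⟨0, by omega⟩) = c)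
    (hgXY : g (b ⟨0, by omega⟩) (b ⟨2 * l + 3, by omega⟩) = 1)
    (hgUV : ∀ (a a' : ℕ) (ha : 1 ≤ a) (ha' : a ≤ l + 1) (hb : 1 ≤ a') (hb' : a' ≤ l + 1),
      g (b ⟨a, by omega⟩) (b ⟨l + 1 + a', by omega⟩) = if a = a' then 1 else 0)
    (hg0 : ∀ i j : Fin (2 * l + 4),
      ¬((i.1 = 0 ∧ j.1 = 0) ∨ (i.1 = 0 ∧ j.1 = 2 * l + 3) ∨ (j.1 = 0 ∧ i.1 = 2 * l + 3) ∨
        (1 ≤ i.1 ∧ i.1 ≤ l + 1 ∧ j.1 = l + 1 + i.1) ∨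
        (1 ≤ j.1 ∧ j.1 ≤ l + 1 ∧ i.1 = l + 1 + j.1)) →
      g (b i) (b j) = 0)
    (R : MultilinearMap ℝ (fun _ : Fin 4 => (Fin (2 * l + 4) → ℝ)) ℝ)
    (hsym1 : ∀ x₁ x₂ x₃ x₄, R ![x₁, x₂, x₃, x₄] = -R ![x₂, x₁, x₃, x₄])
    (hsym2 : ∀ x₁ x₂ x₃ x₄, R ![x₁, x₂, x₃, x₄] = -R ![x₁, x₂, x₄, x₃])
    (hsym3 : ∀ x₁ x₂ x₃ x₄, R ![x₁, x₂, x₃, x₄] = R ![x₃, x₄, x₁, x₂])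
    (hval1 : R ![b ⟨0, by omega⟩, b ⟨1, by omega⟩, b ⟨1, by omega⟩, b ⟨0, by omega⟩] = 1)
    (hval2 : ∀ (a : ℕ) (ha : 2 ≤ a) (ha' : a ≤ l + 1),
      R ![b ⟨0, by omega⟩, b ⟨a, by omega⟩, b ⟨a, by omega⟩, b ⟨0, by omega⟩] = 1)
    (hval3 : ∀ (a : ℕ) (ha : 2 ≤ a) (ha' : a ≤ l + 1),
      R ![b ⟨0, by omega⟩, b ⟨a, by omega⟩, b ⟨a - 1, by omega⟩, b ⟨0, by omega⟩] = 1)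
    (hval4 : ∀ (a : ℕ) (ha : 2 ≤ a) (ha' : a ≤ l + 1),
      R ![b ⟨0, by omega⟩, b ⟨a, by omega⟩, b ⟨l + a, by omega⟩, b ⟨0, by omega⟩] = 1)
    (hvanish : ∀ i₁ i₂ i₃ i₄ : Fin (2 * l + 4),
      ¬(∃ w₁ w₂ : ℕ,
        ((i₁.1 = 0 ∧ i₂.1 = w₁) ∨ (i₂.1 = 0 ∧ i₁.1 = w₁)) ∧
        ((i₃.1 = 0 ∧ i₄.1 = w₂) ∨ (i₄.1 = 0 ∧ i₃.1 = w₂)) ∧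
        ((w₁ = 1 ∧ w₂ = 1) ∨
         ∃ a : ℕ, 2 ≤ a ∧ a ≤ l + 1 ∧
           ((w₁ = a ∧ w₂ = a) ∨ (w₁ = a ∧ w₂ = a - 1) ∨ (w₁ = a - 1 ∧ w₂ = a) ∨
            (w₁ = a ∧ w₂ = l + a) ∨ (w₁ = l + a ∧ w₂ = a)))) →
      R ![b i₁, b i₂, b i₃, b i₄] = 0) :
    (∃ e : Module.Basis (Fin (l + 2) ⊕ Fin (l + 2)) ℝ (Fin (2 * l + 4) → ℝ), ∀ i j,
      g (e i) (e j) =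
        if i = j then Sum.elim (fun _ => (1 : ℝ)) (fun _ => (-1 : ℝ)) i else 0) ∧
    (∀ v, (∀ w, g v w = 0) → v = 0) ∧
    (∀ J : (Fin (2 * l + 4) → ℝ) → Module.End ℝ (Fin (2 * l + 4) → ℝ),
      (∀ ξ y z, g (J ξ y) z = R ![y, ξ, ξ, z]) →
      (∀ ξ, J ξ ^ (2 * l + 2) = 0) ∧ ∃ ξ₀, J ξ₀ ^ (2 * l + 1) ≠ 0) := by
  classical
  -- ===== expansion of R over the basis in each of the first three slots =====
  have expand0 : ∀ y ξ η z : Fin (2 * l + 4) → ℝ,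
      R ![y, ξ, η, z] = ∑ i : Fin (2 * l + 4), b.repr y i * R ![b i, ξ, η, z] := by
    intro y ξ η z
    have hupd : ∀ v : Fin (2 * l + 4) → ℝ,
        Function.update ![y, ξ, η, z] 0 v = ![v, ξ, η, z] := by
      intro v; ext k : 1; fin_cases k <;> simp
    calc R ![y, ξ, η, z] = (R.toLinearMap ![y, ξ, η, z] 0) y := by
          rw [MultilinearMap.toLinearMap_apply, hupd]
      _ = (R.toLinearMap ![y, ξ, η, z] 0) (∑ i : Fin (2 * l + 4), b.repr y i • b i) := by
          rw [b.sum_repr]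
      _ = ∑ i : Fin (2 * l + 4), b.repr y i * R ![b i, ξ, η, z] := by
          rw [map_sum]
          exact Finset.sum_congr rfl fun i _ => by
            rw [map_smul, MultilinearMap.toLinearMap_apply, hupd, smul_eq_mul]
  have expand1 : ∀ y ξ η z : Fin (2 * l + 4) → ℝ,
      R ![y, ξ, η, z] = ∑ i : Fin (2 * l + 4), b.repr ξ i * R ![y, b i, η, z] := by
    intro y ξ η z
    have hupd : ∀ v : Fin (2 * l + 4) → ℝ,
        Function.update ![y, ξ, η, z] 1 v = ![y, v, η, z] := by
      intro v; ext k : 1; fin_cases k <;> simp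
    calc R ![y, ξ, η, z] = (R.toLinearMap ![y, ξ, η, z] 1) ξ := by
          rw [MultilinearMap.toLinearMap_apply, hupd]
      _ = (R.toLinearMap ![y, ξ, η, z] 1) (∑ i : Fin (2 * l + 4), b.repr ξ i • b i) := by
          rw [b.sum_repr]
      _ = ∑ i : Fin (2 * l + 4), b.repr ξ i * R ![y, b i, η, z] := by
          rw [map_sum]
          exact Finset.sum_congr rfl fun i _ => by
            rw [map_smul, MultilinearMap.toLinearMap_apply, hupd, smul_eq_mul]
  have expand2 : ∀ y ξ η z : Fin (2 * l + 4) → ℝ,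
      R ![y, ξ, η, z] = ∑ i : Fin (2 * l + 4), b.repr η i * R ![y, ξ, b i, z] := by
    intro y ξ η z
    have hupd : ∀ v : Fin (2 * l + 4) → ℝ,
        Function.update ![y, ξ, η, z] 2 v = ![y, ξ, v, z] := by
      intro v; ext k : 1; fin_cases k <;> simp
    calc R ![y, ξ, η, z] = (R.toLinearMap ![y, ξ, η, z] 2) η := by
          rw [MultilinearMap.toLinearMap_apply, hupd]
      _ = (R.toLinearMap ![y, ξ, η, z] 2) (∑ i : Fin (2 * l + 4), b.repr η i • b i) := by
          rw [b.sum_repr]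
      _ = ∑ i : Fin (2 * l + 4), b.repr η i * R ![y, ξ, b i, z] := by
          rw [map_sum]
          exact Finset.sum_congr rfl fun i _ => by
            rw [map_smul, MultilinearMap.toLinearMap_apply, hupd, smul_eq_mul]
  -- ===== values of g on the basis, organized by rows =====
  have rowY : ∀ i : Fin (2 * l + 4),
      g (b i) (b ⟨2 * l + 3, by omega⟩) = if i.1 = 0 then 1 else 0 := by
    intro i
    by_cases h : i.1 = 0
    · rw [if_pos h, show i = ⟨0, by omega⟩ from Fin.ext h, hgXY]
    · rw [if_neg h]
      exact hg0 _ _ (by simp only [Fin.val_mk]; omega)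
  have rowX : ∀ i : Fin (2 * l + 4),
      g (b i) (b ⟨0, by omega⟩) = if i.1 = 0 then c else if i.1 = 2 * l + 3 then 1 else 0 := by
    intro i
    by_cases h : i.1 = 0
    · rw [if_pos h, show i = ⟨0, by omega⟩ from Fin.ext h, hgXX]
    · rw [if_neg h]
      by_cases h2 : i.1 = 2 * l + 3
      · rw [if_pos h2, show i = ⟨2 * l + 3, by omega⟩ from Fin.ext h2, hgsym, hgXY]
      · rw [if_neg h2]
        exact hg0 _ _ (by simp only [Fin.val_mk]; omega)
  have rowV : ∀ (j : ℕ) (hj : 1 ≤ j) (hj' : j ≤ l + 1), ∀ i : Fin (2 * l + 4),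
      g (b i) (b ⟨l + 1 + j, by omega⟩) = if i.1 = j then 1 else 0 := by
    intro j hj hj' i
    by_cases h : i.1 = j
    · rw [if_pos h, show i = ⟨j, by omega⟩ from Fin.ext h]
      exact (hgUV j j hj hj' hj hj').trans (if_pos rfl)
    · rw [if_neg h]
      by_cases h2 : 1 ≤ i.1 ∧ i.1 ≤ l + 1
      · exact (hgUV i.1 j h2.1 h2.2 hj hj').trans (if_neg h)
      · exact hg0 _ _ (by simp only [Fin.val_mk]; omega)
  have rowU : ∀ (j : ℕ) (hj : 1 ≤ j) (hj' : j ≤ l + 1), ∀ i : Fin (2 * l + 4),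
      g (b i) (b ⟨j, by omega⟩) = if i.1 = l + 1 + j then 1 else 0 := by
    intro j hj hj' i
    by_cases h : i.1 = l + 1 + j
    · rw [if_pos h, show i = ⟨l + 1 + j, by omega⟩ from Fin.ext h, hgsym]
      exact (hgUV j j hj hj' hj hj').trans (if_pos rfl)
    · rw [if_neg h]
      exact hg0 _ _ (by simp only [Fin.val_mk]; omega)
  -- ===== coordinate extraction through g =====
  have ifconv : ∀ (i : Fin (2 * l + 4)) (t : ℕ) (ht : t < 2 * l + 4),
      (if i.1 = t then (1 : ℝ) else 0) = if i = ⟨t, ht⟩ then (1 : ℝ) else 0 := by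
    intro i t ht
    by_cases h : i.1 = t
    · rw [if_pos h, if_pos (Fin.ext h)]
    · rw [if_neg h, if_neg fun hh => h (congrArg Fin.val hh)]
  have extgen : ∀ (w : Fin (2 * l + 4) → ℝ) (k : Fin (2 * l + 4)),
      (∀ i, g (b i) w = if i = k then 1 else 0) →
      ∀ v, b.repr v k = g v w := by
    intro w k hw v
    conv_rhs => rw [← b.sum_repr v]
    rw [map_sum, LinearMap.sum_apply, Finset.sum_eq_single k]
    · rw [map_smul, LinearMap.smul_apply, hw, if_pos rfl, smul_eq_mul, mul_one]
    · intro i _ hik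
      rw [map_smul, LinearMap.smul_apply, hw, if_neg hik, smul_eq_mul, mul_zero]
    · intro h; exact absurd (Finset.mem_univ k) h
  have ext0 : ∀ v, b.repr v ⟨0, by omega⟩ = g v (b ⟨2 * l + 3, by omega⟩) :=
    extgen _ _ fun i => (rowY i).trans (ifconv i 0 (by omega))
  have extU : ∀ (j : ℕ) (hj : 1 ≤ j) (hj' : j ≤ l + 1), ∀ v,
      b.repr v ⟨j, by omega⟩ = g v (b ⟨l + 1 + j, by omega⟩) :=
    fun j hj hj' => extgen _ _ fun i => (rowV j hj hj' i).trans (ifconv i j (by omega))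
  have extV : ∀ (j : ℕ) (hj : 1 ≤ j) (hj' : j ≤ l + 1), ∀ v,
      b.repr v ⟨l + 1 + j, by omega⟩ = g v (b ⟨j, by omega⟩) :=
    fun j hj hj' => extgen _ _ fun i => (rowU j hj hj' i).trans (ifconv i (l + 1 + j) (by omega))
  have extY : ∀ v, b.repr v ⟨2 * l + 3, by omega⟩ =
      g v (b ⟨0, by omega⟩) - c * g v (b ⟨2 * l + 3, by omega⟩) := by
    intro v
    have hw : ∀ i, g (b i) (b ⟨0, by omega⟩ - c • b ⟨2 * l + 3, by omega⟩) =
        if i = ⟨2 * l + 3, by omega⟩ then 1 else 0 := by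
      intro i
      rw [map_sub, map_smul, smul_eq_mul, rowX i, rowY i, ← ifconv i (2 * l + 3) (by omega)]
      split_ifs <;> first | omega | ring
    rw [extgen _ _ hw v, map_sub, map_smul, smul_eq_mul]
  -- ===== vanishing of R ====
  have Rvan : ∀ (k m : Fin (2 * l + 4)),
      (∀ w₁ w₂ : ℕ,
        ((w₁ = 1 ∧ w₂ = 1) ∨
         ∃ a : ℕ, 2 ≤ a ∧ a ≤ l + 1 ∧
           ((w₁ = a ∧ w₂ = a) ∨ (w₁ = a ∧ w₂ = a - 1) ∨ (w₁ = a - 1 ∧ w₂ = a) ∨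
            (w₁ = a ∧ w₂ = l + a) ∨ (w₁ = l + a ∧ w₂ = a))) →
        ¬((k.1 = 0 ∨ k.1 = w₁) ∧ (m.1 = 0 ∨ m.1 = w₂))) →
      ∀ ξ η, R ![b k, ξ, η, b m] = 0 := by
    intro k m hcond ξ η
    rw [expand1]
    refine Finset.sum_eq_zero fun i₂ _ => mul_eq_zero_of_right _ ?_
    rw [expand2]
    refine Finset.sum_eq_zero fun i₃ _ => mul_eq_zero_of_right _ ?_
    apply hvanish
    rintro ⟨w₁, w₂, h1, h2, h3⟩
    exact hcond w₁ w₂ h3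
      ⟨h1.imp (fun h => h.1) (fun h => h.2), (h2.imp (fun h => h.2) (fun h => h.1)).symm⟩
  have flip2 : ∀ x₁ x₂ x₃ x₄ : Fin (2 * l + 4) → ℝ,
      R ![x₁, x₂, x₃, x₄] = R ![x₂, x₁, x₄, x₃] := by
    intro x₁ x₂ x₃ x₄
    rw [hsym1 x₁ x₂ x₃ x₄, hsym2 x₂ x₁ x₃ x₄, neg_neg]
  -- ===== values of R on (b k, X, X, b m) =====
  have Rb00 : ∀ (k m : Fin (2 * l + 4)),
      R ![b k, b ⟨0, by omega⟩, b ⟨0, by omega⟩, b m] =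
        if ((k.1 = 1 ∧ m.1 = 1) ∨
            ∃ a : ℕ, 2 ≤ a ∧ a ≤ l + 1 ∧
              ((k.1 = a ∧ m.1 = a) ∨ (k.1 = a ∧ m.1 = a - 1) ∨ (k.1 = a - 1 ∧ m.1 = a) ∨
               (k.1 = a ∧ m.1 = l + a) ∨ (k.1 = l + a ∧ m.1 = a))) then 1 else 0 := by
    intro k m
    split_ifs with h
    · rw [flip2]
      rcases h with ⟨hk, hm⟩ | ⟨a, ha, ha', hd⟩
      · obtain rfl : k = ⟨1, by clear hk hm; omega⟩ := Fin.ext hk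
        obtain rfl : m = ⟨1, by clear hm; omega⟩ := Fin.ext hm
        exact hval1
      · rcases hd with ⟨hk, hm⟩ | ⟨hk, hm⟩ | ⟨hk, hm⟩ | ⟨hk, hm⟩ | ⟨hk, hm⟩
        · obtain rfl : k = ⟨a, by clear hk hm; omega⟩ := Fin.ext hk
          obtain rfl : m = ⟨a, by clear hm; omega⟩ := Fin.ext hm
          exact hval2 a ha ha'
        · obtain rfl : k = ⟨a, by clear hk hm; omega⟩ := Fin.ext hk
          obtain rfl : m = ⟨a - 1, by clear hm; omega⟩ := Fin.ext hm
          exact hval3 a ha ha'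
        · obtain rfl : k = ⟨a - 1, by clear hk hm; omega⟩ := Fin.ext hk
          obtain rfl : m = ⟨a, by clear hm; omega⟩ := Fin.ext hm
          rw [hsym3, flip2]
          exact hval3 a ha ha'
        · obtain rfl : k = ⟨a, by clear hk hm; omega⟩ := Fin.ext hk
          obtain rfl : m = ⟨l + a, by clear hm; omega⟩ := Fin.ext hm
          exact hval4 a ha ha'
        · obtain rfl : k = ⟨l + a, by clear hk hm; omega⟩ := Fin.ext hk
          obtain rfl : m = ⟨a, by clear hm; omega⟩ := Fin.ext hm
          rw [hsym3, flip2]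
          exact hval4 a ha ha'
    · apply hvanish
      rintro ⟨w₁, w₂, h1, h2, h3⟩
      simp only [Fin.val_mk] at h1 h2
      apply h
      rcases h3 with ⟨e1, e2⟩ | ⟨a, ha, ha', hd⟩
      · exact Or.inl ⟨by omega, by omega⟩
      · exact Or.inr ⟨a, ha, ha', by omega⟩
  -- ===== block computations for the orthonormal family =====
  have hXX : ∀ s t : ℝ,
      g (b ⟨0, by omega⟩ + s • b ⟨2 * l + 3, by omega⟩)
        (b ⟨0, by omega⟩ + t • b ⟨2 * l + 3, by omega⟩) = c + s + t := by
    intro s t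
    have gYX : g (b ⟨2 * l + 3, by omega⟩) (b ⟨0, by omega⟩) = 1 := by rw [hgsym]; exact hgXY
    have gYY : g (b ⟨2 * l + 3, by omega⟩) (b ⟨2 * l + 3, by omega⟩) = 0 :=
      hg0 _ _ (by simp only [Fin.val_mk]; omega)
    simp only [map_add, map_smul, LinearMap.add_apply, LinearMap.smul_apply, smul_eq_mul,
      hgXX, hgXY, gYX, gYY]
    ring
  have hXU : ∀ (j : ℕ) (hj : 1 ≤ j) (hj' : j ≤ l + 1) (s t : ℝ),
      g (b ⟨0, by omega⟩ + s • b ⟨2 * l + 3, by omega⟩)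
        (b ⟨j, by omega⟩ + t • b ⟨l + 1 + j, by omega⟩) = 0 := by
    intro j hj hj' s t
    have g1 : g (b ⟨0, by omega⟩) (b ⟨j, by omega⟩) = 0 :=
      hg0 _ _ (by simp only [Fin.val_mk]; omega)
    have g2 : g (b ⟨0, by omega⟩) (b ⟨l + 1 + j, by omega⟩) = 0 :=
      hg0 _ _ (by simp only [Fin.val_mk]; omega)
    have g3 : g (b ⟨2 * l + 3, by omega⟩) (b ⟨j, by omega⟩) = 0 :=
      hg0 _ _ (by simp only [Fin.val_mk]; omega)
    have g4 : g (b ⟨2 * l + 3, by omega⟩) (b ⟨l + 1 + j, by omega⟩) = 0 :=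
      hg0 _ _ (by simp only [Fin.val_mk]; omega)
    simp only [map_add, map_smul, LinearMap.add_apply, LinearMap.smul_apply, smul_eq_mul,
      g1, g2, g3, g4]
    ring
  have hUX : ∀ (j : ℕ) (hj : 1 ≤ j) (hj' : j ≤ l + 1) (s t : ℝ),
      g (b ⟨j, by omega⟩ + t • b ⟨l + 1 + j, by omega⟩)
        (b ⟨0, by omega⟩ + s • b ⟨2 * l + 3, by omega⟩) = 0 := by
    intro j hj hj' s t
    rw [hgsym]
    exact hXU j hj hj' s t
  have hUU : ∀ (i j : ℕ) (hi : 1 ≤ i) (hi' : i ≤ l + 1) (hj : 1 ≤ j) (hj' : j ≤ l + 1)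
      (s t : ℝ),
      g (b ⟨i, by omega⟩ + s • b ⟨l + 1 + i, by omega⟩)
        (b ⟨j, by omega⟩ + t • b ⟨l + 1 + j, by omega⟩) =
        if i = j then s + t else 0 := by
    intro i j hi hi' hj hj' s t
    have gUU : g (b ⟨i, by omega⟩) (b ⟨j, by omega⟩) = 0 :=
      hg0 _ _ (by simp only [Fin.val_mk]; omega)
    have gVV : g (b ⟨l + 1 + i, by omega⟩) (b ⟨l + 1 + j, by omega⟩) = 0 :=
      hg0 _ _ (by simp only [Fin.val_mk]; omega)
    have gUV' : g (b ⟨i, by omega⟩) (b ⟨l + 1 + j, by omega⟩) = if i = j then 1 else 0 :=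
      hgUV i j hi hi' hj hj'
    have gVU : g (b ⟨l + 1 + i, by omega⟩) (b ⟨j, by omega⟩) = if j = i then 1 else 0 := by
      rw [hgsym]; exact hgUV j i hj hj' hi hi'
    simp only [map_add, map_smul, LinearMap.add_apply, LinearMap.smul_apply, smul_eq_mul,
      gUU, gVV, gUV', gVU]
    by_cases h : i = j
    · rw [if_pos h, if_pos h.symm, if_pos h]; ring
    · rw [if_neg h, if_neg (Ne.symm h), if_neg h]; ring
  -- ===== part (i) : existence of the orthonormal basis =====
  have part1 : ∃ e : Module.Basis (Fin (l + 2) ⊕ Fin (l + 2)) ℝ (Fin (2 * l + 4) → ℝ), ∀ i j,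
      g (e i) (e j) =
        if i = j then Sum.elim (fun _ => (1 : ℝ)) (fun _ => (-1 : ℝ)) i else 0 := by
    obtain ⟨f, hGram⟩ : ∃ f : (Fin (l + 2) ⊕ Fin (l + 2)) → (Fin (2 * l + 4) → ℝ),
        ∀ p q, g (f p) (f q) =
          if p = q then Sum.elim (fun _ => (1 : ℝ)) (fun _ => (-1 : ℝ)) p else 0 := by
      refine ⟨Sum.elim
        (fun i => if h : i.1 = 0 then
            b ⟨0, by omega⟩ + ((1 - c) / 2) • b ⟨2 * l + 3, by omega⟩
          else b ⟨i.1, by have := i.isLt; omega⟩ +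
            (2⁻¹ : ℝ) • b ⟨l + 1 + i.1, by have := i.isLt; omega⟩)
        (fun i => if h : i.1 = 0 then
            b ⟨0, by omega⟩ + (-(1 + c) / 2) • b ⟨2 * l + 3, by omega⟩
          else b ⟨i.1, by have := i.isLt; omega⟩ +
            (-2⁻¹ : ℝ) • b ⟨l + 1 + i.1, by have := i.isLt; omega⟩), ?_⟩
      have hlem : ∀ (i j : Fin (l + 2)), (i = j) = (i.1 = j.1) := by
        intro i j; rw [Fin.ext_iff]
      rintro (i | i) (j | j) <;> simp only [Sum.elim_inl, Sum.elim_inr] <;>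
        by_cases hi : i.1 = 0 <;> by_cases hj : j.1 = 0
      · obtain rfl : i = j := Fin.ext (by omega)
        rw [dif_pos hi, hXX, if_pos rfl]; ring
      · rw [dif_pos hi, dif_neg hj, hXU j.1 (by omega) (by have := j.isLt; omega),
          if_neg (by intro hh; exact hj (by have := congrArg Fin.val (Sum.inl.inj hh); omega))]
      · rw [dif_neg hi, dif_pos hj, hUX i.1 (by omega) (by have := i.isLt; omega),
          if_neg (by intro hh; exact hi (by have := congrArg Fin.val (Sum.inl.inj hh); omega))]
      · by_cases hij : i = j
        · subst hij
          rw [dif_neg hi, hUU i.1 i.1 (by omega) (by have := i.isLt; omega) (by omega)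
            (by have := i.isLt; omega), if_pos rfl, if_pos rfl]
          norm_num
        · rw [dif_neg hi, dif_neg hj,
            hUU i.1 j.1 (by omega) (by have := i.isLt; omega) (by omega)
              (by have := j.isLt; omega),
            if_neg (fun hh => hij (Fin.ext hh)), if_neg (fun hh => hij (Sum.inl.inj hh))]
      · rw [dif_pos hi, dif_pos hj, hXX, if_neg Sum.inl_ne_inr]; ring
      · rw [dif_pos hi, dif_neg hj, hXU j.1 (by omega) (by have := j.isLt; omega),
          if_neg Sum.inl_ne_inr]
      · rw [dif_neg hi, dif_pos hj, hUX i.1 (by omega) (by have := i.isLt; omega),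
          if_neg Sum.inl_ne_inr]
      · rw [dif_neg hi, dif_neg hj,
          hUU i.1 j.1 (by omega) (by have := i.isLt; omega) (by omega)
            (by have := j.isLt; omega), if_neg Sum.inl_ne_inr]
        split_ifs <;> ring
      · rw [dif_pos hi, dif_pos hj, hXX, if_neg Sum.inr_ne_inl]; ring
      · rw [dif_pos hi, dif_neg hj, hXU j.1 (by omega) (by have := j.isLt; omega),
          if_neg Sum.inr_ne_inl]
      · rw [dif_neg hi, dif_pos hj, hUX i.1 (by omega) (by have := i.isLt; omega),
          if_neg Sum.inr_ne_inl]
      · rw [dif_neg hi, dif_neg hj,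
          hUU i.1 j.1 (by omega) (by have := i.isLt; omega) (by omega)
            (by have := j.isLt; omega), if_neg Sum.inr_ne_inl]
        split_ifs <;> ring
      · obtain rfl : i = j := Fin.ext (by omega)
        rw [dif_pos hi, hXX, if_pos rfl]; ring
      · rw [dif_pos hi, dif_neg hj, hXU j.1 (by omega) (by have := j.isLt; omega),
          if_neg (by intro hh; exact hj (by have := congrArg Fin.val (Sum.inr.inj hh); omega))]
      · rw [dif_neg hi, dif_pos hj, hUX i.1 (by omega) (by have := i.isLt; omega),
          if_neg (by intro hh; exact hi (by have := congrArg Fin.val (Sum.inr.inj hh); omega))]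
      · by_cases hij : i = j
        · subst hij
          rw [dif_neg hi, hUU i.1 i.1 (by omega) (by have := i.isLt; omega) (by omega)
            (by have := i.isLt; omega), if_pos rfl, if_pos rfl]
          norm_num
        · rw [dif_neg hi, dif_neg hj,
            hUU i.1 j.1 (by omega) (by have := i.isLt; omega) (by omega)
              (by have := j.isLt; omega),
            if_neg (fun hh => hij (Fin.ext hh)), if_neg (fun hh => hij (Sum.inr.inj hh))]
    have hli : LinearIndependent ℝ f := by
      rw [Fintype.linearIndependent_iff]
      intro coef hsum q
      have h0 : g (∑ p, coef p • f p) (f q) = 0 := by rw [hsum]; simp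
      rw [map_sum, LinearMap.sum_apply] at h0
      rw [Finset.sum_congr rfl (fun p _ => by
        rw [map_smul, LinearMap.smul_apply, hGram, smul_eq_mul])] at h0
      rw [Finset.sum_eq_single q (fun p _ hpq => by rw [if_neg hpq, mul_zero])
        (fun h => absurd (Finset.mem_univ q) h), if_pos rfl] at h0
      rcases q with q | q
      · simpa using h0
      · simpa using h0
    have hcard : Fintype.card (Fin (l + 2) ⊕ Fin (l + 2)) =
        Module.finrank ℝ (Fin (2 * l + 4) → ℝ) := by
      simp [Fintype.card_sum]
      omega
    refine ⟨basisOfLinearIndependentOfCardEqFinrank hli hcard, fun p q => ?_⟩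
    rw [coe_basisOfLinearIndependentOfCardEqFinrank]
    exact hGram p q
  -- ===== part (ii) : nondegeneracy =====
  have part2 : ∀ v : Fin (2 * l + 4) → ℝ, (∀ w, g v w = 0) → v = 0 := by
    intro v hv
    have hall : ∀ i : Fin (2 * l + 4), b.repr v i = 0 := by
      intro i
      rcases (show i.1 = 0 ∨ (1 ≤ i.1 ∧ i.1 ≤ l + 1) ∨ (l + 2 ≤ i.1 ∧ i.1 ≤ 2 * l + 2) ∨
          i.1 = 2 * l + 3 from by have := i.isLt; omega) with h | h | h | h
      · rw [show i = ⟨0, by clear h; omega⟩ from Fin.ext h]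
        exact (ext0 v).trans (hv _)
      · exact (extU i.1 h.1 h.2 v).trans (hv _)
      · rw [show i = ⟨l + 1 + (i.1 - (l + 1)), by clear h; have := i.isLt; omega⟩ from
          Fin.ext (by simp only [Fin.val_mk]; omega)]
        exact (extV (i.1 - (l + 1)) (by omega) (by omega) v).trans (hv _)
      · rw [show i = ⟨2 * l + 3, by clear h; omega⟩ from Fin.ext h]
        rw [extY v, hv, hv]
        ring
    exact b.repr.map_eq_zero_iff.mp (Finsupp.ext hall)
  refine ⟨part1, part2, ?_⟩
  -- ===== part (iii) : the Jacobi operator =====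
  intro J hJ
  have Rlast : ∀ (ξ η v : Fin (2 * l + 4) → ℝ), R ![v, ξ, η, b ⟨2 * l + 3, by omega⟩] = 0 := by
    intro ξ η v
    rw [expand0]
    refine Finset.sum_eq_zero fun k _ => mul_eq_zero_of_right _ ?_
    refine Rvan k ⟨2 * l + 3, by omega⟩ ?_ ξ η
    rintro w₁ w₂ hS ⟨hk, hm⟩
    simp only [Fin.val_mk] at hm
    rcases hS with ⟨e1, e2⟩ | ⟨a, ha, ha', hd⟩ <;> omega
  have coordX : ∀ ξ v, b.repr (J ξ v) ⟨0, by omega⟩ = 0 := by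
    intro ξ v
    rw [ext0 (J ξ v), hJ]
    exact Rlast ξ ξ v
  have coordU : ∀ ξ v (j : ℕ) (hj : 1 ≤ j) (hj' : j ≤ l + 1),
      b.repr (J ξ v) ⟨j, by omega⟩ = R ![v, ξ, ξ, b ⟨l + 1 + j, by omega⟩] := by
    intro ξ v j hj hj'
    rw [extU j hj hj' (J ξ v), hJ]
  have coordV : ∀ ξ v (j : ℕ) (hj : 1 ≤ j) (hj' : j ≤ l + 1),
      b.repr (J ξ v) ⟨l + 1 + j, by omega⟩ = R ![v, ξ, ξ, b ⟨j, by omega⟩] := by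
    intro ξ v j hj hj'
    rw [extV j hj hj' (J ξ v), hJ]
  have coordY : ∀ ξ v, b.repr (J ξ v) ⟨2 * l + 3, by omega⟩ =
      R ![v, ξ, ξ, b ⟨0, by omega⟩] := by
    intro ξ v
    rw [extY (J ξ v), hJ, hJ, Rlast]
    ring
  constructor
  · -- nilpotency of order 2l+2
    intro ξ
    have step : ∀ (M : ℕ) (v : Fin (2 * l + 4) → ℝ),
        (∀ i : Fin (2 * l + 4),
          ((i.1 = 0 ∧ 2 * l + 2 ≤ M + 1) ∨ (1 ≤ i.1 ∧ i.1 ≤ l + 1 ∧ l + 1 + i.1 ≤ M + 1) ∨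
           (l + 2 ≤ i.1 ∧ i.1 ≤ 2 * l + 2 ∧ 2 * l + 3 ≤ M + 1 + i.1) ∨
           (i.1 = 2 * l + 3 ∧ 1 ≤ M + 1)) ∨ b.repr v i = 0) →
        (∀ i : Fin (2 * l + 4),
          ((i.1 = 0 ∧ 2 * l + 2 ≤ M) ∨ (1 ≤ i.1 ∧ i.1 ≤ l + 1 ∧ l + 1 + i.1 ≤ M) ∨
           (l + 2 ≤ i.1 ∧ i.1 ≤ 2 * l + 2 ∧ 2 * l + 3 ≤ M + i.1) ∨
           (i.1 = 2 * l + 3 ∧ 1 ≤ M)) ∨ b.repr (J ξ v) i = 0) := by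
      intro M v hv i
      rcases (show i.1 = 0 ∨ (1 ≤ i.1 ∧ i.1 ≤ l + 1) ∨ (l + 2 ≤ i.1 ∧ i.1 ≤ 2 * l + 2) ∨
          i.1 = 2 * l + 3 from by have := i.isLt; omega) with h | h | h | h
      · refine Or.inr ?_
        rw [show i = ⟨0, by clear h; omega⟩ from Fin.ext h]
        exact coordX ξ v
      · by_cases hM : l + 1 + i.1 ≤ M
        · exact Or.inl (by omega)
        · refine Or.inr ?_
          rw [show i = ⟨i.1, i.isLt⟩ from rfl, coordU ξ v i.1 h.1 h.2, expand0]
          refine Finset.sum_eq_zero fun k _ => ?_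
          rcases hv k with hk | hk
          · refine mul_eq_zero_of_right _ (Rvan k ⟨l + 1 + i.1, by have := i.isLt; omega⟩
              ?_ ξ ξ)
            rintro w₁ w₂ hS ⟨hw1, hw2⟩
            simp only [Fin.val_mk] at hw2
            rcases hS with ⟨e1, e2⟩ | ⟨a, ha, ha', hd⟩ <;> omega
          · exact mul_eq_zero_of_left hk _
      · by_cases hM : 2 * l + 3 ≤ M + i.1
        · exact Or.inl (by omega)
        · refine Or.inr ?_
          rw [show i = ⟨l + 1 + (i.1 - (l + 1)), by clear h hM; have := i.isLt; omega⟩ from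
            Fin.ext (by simp only [Fin.val_mk]; omega)]
          rw [coordV ξ v (i.1 - (l + 1)) (by omega) (by omega), expand0]
          refine Finset.sum_eq_zero fun k _ => ?_
          rcases hv k with hk | hk
          · refine mul_eq_zero_of_right _ (Rvan k ⟨i.1 - (l + 1), by have := i.isLt; omega⟩
              ?_ ξ ξ)
            rintro w₁ w₂ hS ⟨hw1, hw2⟩
            simp only [Fin.val_mk] at hw2
            rcases hS with ⟨e1, e2⟩ | ⟨a, ha, ha', hd⟩ <;> omega
          · exact mul_eq_zero_of_left hk _
      · by_cases hM : 1 ≤ M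
        · exact Or.inl (by omega)
        · refine Or.inr ?_
          rw [show i = ⟨2 * l + 3, by clear h hM; omega⟩ from Fin.ext h, coordY ξ v, expand0]
          refine Finset.sum_eq_zero fun k _ => ?_
          rcases hv k with hk | hk
          · refine mul_eq_zero_of_right _ (Rvan k ⟨0, by clear hk hM h; omega⟩ ?_ ξ ξ)
            rintro w₁ w₂ hS ⟨hw1, hw2⟩
            simp only [Fin.val_mk] at hw2
            rcases hS with ⟨e1, e2⟩ | ⟨a, ha, ha', hd⟩ <;> omega
          · exact mul_eq_zero_of_left hk _
    have main : ∀ (M : ℕ) (v : Fin (2 * l + 4) → ℝ),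
        (∀ i : Fin (2 * l + 4),
          ((i.1 = 0 ∧ 2 * l + 2 ≤ M) ∨ (1 ≤ i.1 ∧ i.1 ≤ l + 1 ∧ l + 1 + i.1 ≤ M) ∨
           (l + 2 ≤ i.1 ∧ i.1 ≤ 2 * l + 2 ∧ 2 * l + 3 ≤ M + i.1) ∨
           (i.1 = 2 * l + 3 ∧ 1 ≤ M)) ∨ b.repr v i = 0) →
        (J ξ ^ M) v = 0 := by
      intro M
      induction M with
      | zero =>
        intro v hv
        rw [pow_zero, Module.End.one_apply]
        have hall : ∀ i, b.repr v i = 0 := by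
          intro i
          rcases hv i with hk | hk
          · exact absurd hk (by omega)
          · exact hk
        exact b.repr.map_eq_zero_iff.mp (Finsupp.ext hall)
      | succ M ih =>
        intro v hv
        rw [pow_succ, Module.End.mul_apply]
        exact ih (J ξ v) (step M v hv)
    refine LinearMap.ext fun v => ?_
    rw [LinearMap.zero_apply]
    exact main (2 * l + 2) v (fun i => Or.inl (by have := i.isLt; omega))
  · -- non-vanishing: take ξ₀ = X
    refine ⟨b ⟨0, by omega⟩, fun hzero => ?_⟩
    have JB : ∀ (v : Fin (2 * l + 4) → ℝ) (m : Fin (2 * l + 4)),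
        R ![v, b ⟨0, by omega⟩, b ⟨0, by omega⟩, b m] =
          ∑ k : Fin (2 * l + 4), b.repr v k *
            (if ((k.1 = 1 ∧ m.1 = 1) ∨
              ∃ a : ℕ, 2 ≤ a ∧ a ≤ l + 1 ∧
                ((k.1 = a ∧ m.1 = a) ∨ (k.1 = a ∧ m.1 = a - 1) ∨ (k.1 = a - 1 ∧ m.1 = a) ∨
                 (k.1 = a ∧ m.1 = l + a) ∨ (k.1 = l + a ∧ m.1 = a))) then 1 else 0) := by
      intro v m
      rw [expand0]
      exact Finset.sum_congr rfl fun k _ => by rw [Rb00]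
    have JU0 : ∀ (v : Fin (2 * l + 4) → ℝ) (j : ℕ) (hj : 1 ≤ j) (hj' : j ≤ l),
        b.repr (J (b ⟨0, by omega⟩) v) ⟨j, by omega⟩ = b.repr v ⟨j + 1, by omega⟩ := by
      intro v j hj hj'
      rw [coordU _ v j hj (by omega), JB]
      rw [Finset.sum_eq_single (⟨j + 1, by omega⟩ : Fin (2 * l + 4))]
      · rw [if_pos (Or.inr ⟨j + 1, by omega, by omega,
          by simp only [Fin.val_mk, true_and, and_true]; omega⟩), mul_one]
      · intro k _ hk
        refine mul_eq_zero_of_right _ (if_neg ?_)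
        have hne : k.1 ≠ j + 1 := fun hh => hk (Fin.ext hh)
        rintro (⟨e1, e2⟩ | ⟨a, ha, ha', hd⟩)
        · simp only [Fin.val_mk, true_and, and_true] at e2; omega
        · simp only [Fin.val_mk, true_and, and_true] at hd; omega
      · intro hmem; exact absurd (Finset.mem_univ _) hmem
    have JUl0 : ∀ v : Fin (2 * l + 4) → ℝ,
        b.repr (J (b ⟨0, by omega⟩) v) ⟨l + 1, by omega⟩ = 0 := by
      intro v
      rw [coordU _ v (l + 1) (by omega) (by omega), JB]
      refine Finset.sum_eq_zero fun k _ => mul_eq_zero_of_right _ (if_neg ?_)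
      rintro (⟨e1, e2⟩ | ⟨a, ha, ha', hd⟩)
      · simp only [Fin.val_mk, true_and, and_true] at e2; omega
      · simp only [Fin.val_mk, true_and, and_true] at hd; omega
    have JY0 : ∀ v : Fin (2 * l + 4) → ℝ,
        b.repr (J (b ⟨0, by omega⟩) v) ⟨2 * l + 3, by omega⟩ = 0 := by
      intro v
      rw [coordY, JB]
      refine Finset.sum_eq_zero fun k _ => mul_eq_zero_of_right _ (if_neg ?_)
      rintro (⟨e1, e2⟩ | ⟨a, ha, ha', hd⟩)
      · simp only [Fin.val_mk, true_and, and_true] at e2; omega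
      · simp only [Fin.val_mk, true_and, and_true] at hd; omega
    have pos : ∀ (k : ℕ) (hk2 : k ≤ 2 * l + 1),
        (∀ i, 0 ≤ b.repr ((J (b ⟨0, by omega⟩) ^ k) (b ⟨l + 1, by omega⟩)) i) ∧
        1 ≤ b.repr ((J (b ⟨0, by omega⟩) ^ k) (b ⟨l + 1, by omega⟩))
          ⟨if k ≤ l then l + 1 - k else k + 1, by split <;> omega⟩ := by
      intro k
      induction k with
      | zero =>
        intro _
        constructor
        · intro i
          rw [pow_zero, Module.End.one_apply, b.repr_self, Finsupp.single_apply]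
          split <;> norm_num
        · have e0 : (⟨l + 1, by omega⟩ : Fin (2 * l + 4)) =
              ⟨if 0 ≤ l then l + 1 - 0 else 0 + 1, by split <;> omega⟩ :=
            Fin.ext (by simp only [Fin.val_mk]; rw [if_pos (Nat.zero_le l)]; omega)
          rw [pow_zero, Module.End.one_apply, b.repr_self, Finsupp.single_apply, if_pos e0]
      | succ k ih =>
        intro hk1
        obtain ⟨ihn, ihp⟩ := ih (by omega)
        have hstep : ∀ i, b.repr ((J (b ⟨0, by omega⟩) ^ (k + 1)) (b ⟨l + 1, by omega⟩)) i =
            b.repr (J (b ⟨0, by omega⟩)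
              ((J (b ⟨0, by omega⟩) ^ k) (b ⟨l + 1, by omega⟩))) i := by
          intro i; rw [pow_succ', Module.End.mul_apply]
        constructor
        · intro i
          rw [hstep]
          rcases (show i.1 = 0 ∨ (1 ≤ i.1 ∧ i.1 ≤ l) ∨ i.1 = l + 1 ∨
              (l + 2 ≤ i.1 ∧ i.1 ≤ 2 * l + 2) ∨ i.1 = 2 * l + 3 from
              by have := i.isLt; omega) with h | h | h | h | h
          · rw [show i = ⟨0, by clear h; omega⟩ from Fin.ext h, coordX]
          · rw [show i = ⟨i.1, i.isLt⟩ from rfl, JU0 _ i.1 h.1 h.2]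
            exact ihn _
          · rw [show i = ⟨l + 1, by clear h; omega⟩ from Fin.ext h, JUl0]
          · rw [show i = ⟨l + 1 + (i.1 - (l + 1)), by clear h; have := i.isLt; omega⟩ from
              Fin.ext (by simp only [Fin.val_mk]; omega),
              coordV _ _ (i.1 - (l + 1)) (by omega) (by omega), JB]
            refine Finset.sum_nonneg fun k' _ => mul_nonneg (ihn k') ?_
            split <;> norm_num
          · rw [show i = ⟨2 * l + 3, by clear h; omega⟩ from Fin.ext h, JY0]
        · rw [hstep]
          by_cases hkl : k + 1 ≤ l
          · rw [show (⟨if k + 1 ≤ l then l + 1 - (k + 1) else k + 1 + 1, by split <;> omega⟩ :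
                Fin (2 * l + 4)) = ⟨l - k, by omega⟩ from
              Fin.ext (by simp only [Fin.val_mk, if_pos hkl]; omega),
              JU0 _ (l - k) (by omega) (by omega)]
            have e2 : (⟨if k ≤ l then l + 1 - k else k + 1, by split <;> omega⟩ :
                Fin (2 * l + 4)) = ⟨l - k + 1, by omega⟩ :=
              Fin.ext (by simp only [Fin.val_mk, if_pos (show k ≤ l by omega)]; omega)
            rw [e2] at ihp
            exact ihp
          · rw [show (⟨if k + 1 ≤ l then l + 1 - (k + 1) else k + 1 + 1, by split <;> omega⟩ :
                Fin (2 * l + 4)) = ⟨l + 1 + (k + 1 - l), by omega⟩ from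
              Fin.ext (by simp only [Fin.val_mk, if_neg hkl]; omega),
              coordV _ _ (k + 1 - l) (by omega) (by omega), JB]
            by_cases hkk : k ≤ l
            · have e3 : (⟨if k ≤ l then l + 1 - k else k + 1, by split <;> omega⟩ :
                  Fin (2 * l + 4)) = ⟨1, by omega⟩ :=
                Fin.ext (by simp only [Fin.val_mk]; rw [if_pos hkk]; omega)
              rw [e3] at ihp
              refine le_trans ?_ (Finset.single_le_sum
                (fun k' _ => mul_nonneg (ihn k') (by split <;> norm_num))
                (Finset.mem_univ (⟨1, by omega⟩ : Fin (2 * l + 4))))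
              have hC : ((1 = 1 ∧ k + 1 - l = 1) ∨
                  ∃ a : ℕ, 2 ≤ a ∧ a ≤ l + 1 ∧
                    ((1 = a ∧ k + 1 - l = a) ∨ (1 = a ∧ k + 1 - l = a - 1) ∨
                     (1 = a - 1 ∧ k + 1 - l = a) ∨ (1 = a ∧ k + 1 - l = l + a) ∨
                     (1 = l + a ∧ k + 1 - l = a))) := Or.inl ⟨rfl, by omega⟩
              rw [if_pos hC, mul_one]
              exact ihp
            · have e3 : (⟨if k ≤ l then l + 1 - k else k + 1, by split <;> omega⟩ :
                  Fin (2 * l + 4)) = ⟨k + 1, by omega⟩ :=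
                Fin.ext (by simp only [Fin.val_mk]; rw [if_neg hkk])
              rw [e3] at ihp
              refine le_trans ?_ (Finset.single_le_sum
                (fun k' _ => mul_nonneg (ihn k') (by split <;> norm_num))
                (Finset.mem_univ (⟨k + 1, by omega⟩ : Fin (2 * l + 4))))
              have hC : ((k + 1 = 1 ∧ k + 1 - l = 1) ∨
                  ∃ a : ℕ, 2 ≤ a ∧ a ≤ l + 1 ∧
                    ((k + 1 = a ∧ k + 1 - l = a) ∨ (k + 1 = a ∧ k + 1 - l = a - 1) ∨
                     (k + 1 = a - 1 ∧ k + 1 - l = a) ∨ (k + 1 = a ∧ k + 1 - l = l + a) ∨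
                     (k + 1 = l + a ∧ k + 1 - l = a))) :=
                Or.inr ⟨k + 1 - l, by omega, by omega, by omega⟩
              rw [if_pos hC, mul_one]
              exact ihp
    have hp := (pos (2 * l + 1) (le_refl _)).2
    rw [hzero] at hp
    simp only [LinearMap.zero_apply, map_zero, Finsupp.coe_zero, Pi.zero_apply] at hp
    exact absurd hp (by norm_num)
end

section
/- Let {X,U,V,Y} be a basis of ℝ^4 and c ∈ ℝ. Let g be the symmetric bilinear form with g(X,X) = c, g(X,Y) = 1, g(U,V) = 1, all other products 0, and let R be the 4-linear form whose only nonzero components, up to the symmetries R(x_1,x_2,x_3,x_4) = −R(x_2,x_1,x_3,x_4) = −R(x_1,x_2,x_4,x_3) = R(x_3,x_4,x_1,x_2), are R(X,U,U,X) = 1. Then for every pair of vectors f_1, f_2 ∈ ℝ^4 with g(f_1,f_1) = ±1, g(f_2,f_2) = ±1 and g(f_1,f_2) = 0, the skew-symmetric curvature operator ℛ(f_1,f_2) satisfies ℛ(f_1,f_2)² = 0; moreover there exists such a pair (f_1,f_2) with ℛ(f_1,f_2) ≠ 0. -/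
private lemma upd0 (x0 x1 x2 x3 y : Fin 4 → ℝ) :
    Function.update ![x0,x1,x2,x3] (0 : Fin 4) y = ![y,x1,x2,x3] := by
  funext j; fin_cases j <;> simp

private lemma upd1 (x0 x1 x2 x3 y : Fin 4 → ℝ) :
    Function.update ![x0,x1,x2,x3] (1 : Fin 4) y = ![x0,y,x2,x3] := by
  funext j; fin_cases j <;> simp

private lemma upd2 (x0 x1 x2 x3 y : Fin 4 → ℝ) :
    Function.update ![x0,x1,x2,x3] (2 : Fin 4) y = ![x0,x1,y,x3] := by
  funext j; fin_cases j <;> simp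

private lemma upd3 (x0 x1 x2 x3 y : Fin 4 → ℝ) :
    Function.update ![x0,x1,x2,x3] (3 : Fin 4) y = ![x0,x1,x2,y] := by
  funext j; fin_cases j <;> simp

section exp
variable (b : Module.Basis (Fin 4) ℝ (Fin 4 → ℝ))
    (R : MultilinearMap ℝ (fun _ : Fin 4 => (Fin 4 → ℝ)) ℝ)

private lemma Rexp0 (x1 x2 x3 x4 : Fin 4 → ℝ) :
    R ![x1,x2,x3,x4] = ∑ i, b.repr x1 i • R ![b i, x2, x3, x4] := by
  rw [show (![x1,x2,x3,x4] : Fin 4 → Fin 4 → ℝ)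
      = Function.update ![x1,x2,x3,x4] 0 (∑ i, b.repr x1 i • b i) by
    rw [b.sum_repr, upd0]]
  rw [R.map_update_sum]
  refine Finset.sum_congr rfl fun i _ => ?_
  rw [R.map_update_smul, upd0]

private lemma Rexp1 (x1 x2 x3 x4 : Fin 4 → ℝ) :
    R ![x1,x2,x3,x4] = ∑ i, b.repr x2 i • R ![x1, b i, x3, x4] := by
  rw [show (![x1,x2,x3,x4] : Fin 4 → Fin 4 → ℝ)
      = Function.update ![x1,x2,x3,x4] 1 (∑ i, b.repr x2 i • b i) by
    rw [b.sum_repr, upd1]]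
  rw [R.map_update_sum]
  refine Finset.sum_congr rfl fun i _ => ?_
  rw [R.map_update_smul, upd1]

private lemma Rexp2 (x1 x2 x3 x4 : Fin 4 → ℝ) :
    R ![x1,x2,x3,x4] = ∑ i, b.repr x3 i • R ![x1, x2, b i, x4] := by
  rw [show (![x1,x2,x3,x4] : Fin 4 → Fin 4 → ℝ)
      = Function.update ![x1,x2,x3,x4] 2 (∑ i, b.repr x3 i • b i) by
    rw [b.sum_repr, upd2]]
  rw [R.map_update_sum]
  refine Finset.sum_congr rfl fun i _ => ?_
  rw [R.map_update_smul, upd2]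

private lemma Rexp3 (x1 x2 x3 x4 : Fin 4 → ℝ) :
    R ![x1,x2,x3,x4] = ∑ i, b.repr x4 i • R ![x1, x2, x3, b i] := by
  rw [show (![x1,x2,x3,x4] : Fin 4 → Fin 4 → ℝ)
      = Function.update ![x1,x2,x3,x4] 3 (∑ i, b.repr x4 i • b i) by
    rw [b.sum_repr, upd3]]
  rw [R.map_update_sum]
  refine Finset.sum_congr rfl fun i _ => ?_
  rw [R.map_update_smul, upd3]

private lemma Radd0 (y z x2 x3 x4 : Fin 4 → ℝ) :
    R ![y + z, x2, x3, x4] = R ![y,x2,x3,x4] + R ![z,x2,x3,x4] := by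
  have := R.map_update_add ![y,x2,x3,x4] 0 y z
  rwa [upd0, upd0, upd0] at this

private lemma Rsmul0 (a : ℝ) (y x2 x3 x4 : Fin 4 → ℝ) :
    R ![a • y, x2, x3, x4] = a • R ![y,x2,x3,x4] := by
  have := R.map_update_smul ![y,x2,x3,x4] 0 a y
  rwa [upd0, upd0] at this

private lemma Radd1 (x1 y z x3 x4 : Fin 4 → ℝ) :
    R ![x1, y + z, x3, x4] = R ![x1,y,x3,x4] + R ![x1,z,x3,x4] := by
  have := R.map_update_add ![x1,y,x3,x4] 1 y z
  rwa [upd1, upd1, upd1] at this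

private lemma Rsmul1 (a : ℝ) (x1 y x3 x4 : Fin 4 → ℝ) :
    R ![x1, a • y, x3, x4] = a • R ![x1,y,x3,x4] := by
  have := R.map_update_smul ![x1,y,x3,x4] 1 a y
  rwa [upd1, upd1] at this

end exp

set_option maxHeartbeats 2000000

/-- for the inner product with `g(X,X) = c`, `g(X,Y) = g(U,V) = 1` on `ℝ⁴`
(basis `X = b 0`, `U = b 1`, `V = b 2`, `Y = b 3`) and the 4-linear form with
`R(X,U,U,X) = 1` as its only nonzero component up to the usual symmetries, the
skew-symmetric curvature operator `ℛ(f₁,f₂)`, defined by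
`g(ℛ(f₁,f₂)y,z) = R(f₁,f₂,y,z)` for `f₁, f₂` an orthonormal pair, satisfies
`ℛ(f₁,f₂)² = 0` for every such pair, and `ℛ(f₁,f₂) ≠ 0` for some such pair. -/
theorem ip_nilpotent_order_two_R4
    (b : Module.Basis (Fin 4) ℝ (Fin 4 → ℝ)) (c : ℝ)
    (g : (Fin 4 → ℝ) →ₗ[ℝ] (Fin 4 → ℝ) →ₗ[ℝ] ℝ)
    (hgsym : ∀ v w, g v w = g w v)
    (hgXX : g (b 0) (b 0) = c)
    (hgXY : g (b 0) (b 3) = 1)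
    (hgUV : g (b 1) (b 2) = 1)
    (hg0 : ∀ i j : Fin 4,
      ¬((i = 0 ∧ j = 0) ∨ (i = 0 ∧ j = 3) ∨ (i = 3 ∧ j = 0) ∨
        (i = 1 ∧ j = 2) ∨ (i = 2 ∧ j = 1)) →
      g (b i) (b j) = 0)
    (R : MultilinearMap ℝ (fun _ : Fin 4 => (Fin 4 → ℝ)) ℝ)
    (hsym1 : ∀ x₁ x₂ x₃ x₄, R ![x₁, x₂, x₃, x₄] = -R ![x₂, x₁, x₃, x₄])
    (hsym2 : ∀ x₁ x₂ x₃ x₄, R ![x₁, x₂, x₃, x₄] = -R ![x₁, x₂, x₄, x₃])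
    (hsym3 : ∀ x₁ x₂ x₃ x₄, R ![x₁, x₂, x₃, x₄] = R ![x₃, x₄, x₁, x₂])
    (hval : R ![b 0, b 1, b 1, b 0] = 1)
    (hvanish : ∀ i₁ i₂ i₃ i₄ : Fin 4,
      ¬(((i₁ = 0 ∧ i₂ = 1) ∨ (i₁ = 1 ∧ i₂ = 0)) ∧
        ((i₃ = 1 ∧ i₄ = 0) ∨ (i₃ = 0 ∧ i₄ = 1))) →
      R ![b i₁, b i₂, b i₃, b i₄] = 0) :
    (∀ f₁ f₂ : Fin 4 → ℝ,
      (g f₁ f₁ = 1 ∨ g f₁ f₁ = -1) → (g f₂ f₂ = 1 ∨ g f₂ f₂ = -1) → g f₁ f₂ = 0 →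
      ∀ Rop : Module.End ℝ (Fin 4 → ℝ),
        (∀ y z, g (Rop y) z = R ![f₁, f₂, y, z]) → Rop ^ 2 = 0) ∧
    (∃ f₁ f₂ : Fin 4 → ℝ,
      (g f₁ f₁ = 1 ∨ g f₁ f₁ = -1) ∧ (g f₂ f₂ = 1 ∨ g f₂ f₂ = -1) ∧ g f₁ f₂ = 0 ∧
      ∀ Rop : Module.End ℝ (Fin 4 → ℝ),
        (∀ y z, g (Rop y) z = R ![f₁, f₂, y, z]) → Rop ≠ 0) := by
  classical
  -- table of g on basis vectors
  have gb : ∀ i j : Fin 4, g (b i) (b j)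
      = !![c,0,0,1; 0,0,1,0; 0,1,0,0; 1,0,0,0] i j := by
    have hUVsym : g (b 2) (b 1) = 1 := by rw [hgsym]; exact hgUV
    have hXYsym : g (b 3) (b 0) = 1 := by rw [hgsym]; exact hgXY
    intro i j
    fin_cases i <;> fin_cases j <;>
      first
      | simpa using hgXX
      | simpa using hgXY
      | simpa using hgUV
      | simpa using hUVsym
      | simpa using hXYsym
      | simpa using hg0 _ _ (by decide)
  -- coordinate formulas
  have c0 : ∀ v, b.repr v 0 = g v (b 3) := by
    intro v
    conv_rhs => rw [← b.sum_repr v]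
    rw [map_sum, LinearMap.sum_apply, Fin.sum_univ_four]
    simp only [map_smul, LinearMap.smul_apply, smul_eq_mul, gb]
    simp [Matrix.of_apply]
  have c1 : ∀ v, b.repr v 1 = g v (b 2) := by
    intro v
    conv_rhs => rw [← b.sum_repr v]
    rw [map_sum, LinearMap.sum_apply, Fin.sum_univ_four]
    simp only [map_smul, LinearMap.smul_apply, smul_eq_mul, gb]
    simp [Matrix.of_apply]
  have c2 : ∀ v, b.repr v 2 = g v (b 1) := by
    intro v
    conv_rhs => rw [← b.sum_repr v]
    rw [map_sum, LinearMap.sum_apply, Fin.sum_univ_four]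
    simp only [map_smul, LinearMap.smul_apply, smul_eq_mul, gb]
    simp [Matrix.of_apply]
  have c3 : ∀ v, b.repr v 3 = g v (b 0) - c * g v (b 3) := by
    intro v
    have e0 : g v (b 0) = c * b.repr v 0 + b.repr v 3 := by
      conv_lhs => rw [← b.sum_repr v]
      rw [map_sum, LinearMap.sum_apply, Fin.sum_univ_four]
      simp only [map_smul, LinearMap.smul_apply, smul_eq_mul, gb]
      simp [Matrix.of_apply]
      ring
    have e3 : g v (b 3) = b.repr v 0 := by
      conv_lhs => rw [← b.sum_repr v]
      rw [map_sum, LinearMap.sum_apply, Fin.sum_univ_four]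
      simp only [map_smul, LinearMap.smul_apply, smul_eq_mul, gb]
      simp [Matrix.of_apply]
    rw [e0, e3]; ring
  have nondeg : ∀ v, (∀ z, g v z = 0) → v = 0 := by
    intro v h
    refine b.ext_elem fun i => ?_
    fin_cases i <;> simp [c0, c1, c2, c3, h]
  -- vanishing of R with slot-2 basis vector b 2 or b 3
  have hA : ∀ k : Fin 4, (k = 2 ∨ k = 3) →
      ∀ x1 x2 x4, R ![x1, x2, b k, x4] = 0 := by
    intro k hk x1 x2 x4
    have base : ∀ i j l, R ![b i, b j, b k, b l] = 0 := by
      intro i j l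
      apply hvanish
      rintro ⟨-, ⟨h, -⟩ | ⟨h, -⟩⟩ <;> rcases hk with rfl | rfl <;>
        exact absurd h (by decide)
    rw [Rexp0 b R]
    refine Finset.sum_eq_zero fun i _ => ?_
    rw [Rexp1 b R]
    rw [Finset.smul_sum]
    refine Finset.sum_eq_zero fun j _ => ?_
    rw [Rexp3 b R]
    rw [Finset.smul_sum, Finset.smul_sum]
    refine Finset.sum_eq_zero fun l _ => ?_
    rw [base i j l]
    simp
  -- vanishing in slot 3
  have hA' : ∀ k : Fin 4, (k = 2 ∨ k = 3) →
      ∀ x1 x2 x3, R ![x1, x2, x3, b k] = 0 := by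
    intro k hk x1 x2 x3
    rw [hsym2, hA k hk, neg_zero]
  -- vanishing when slot-2 vector has no b0/b1 components
  have hB : ∀ x1 x2 w z, b.repr w 0 = 0 → b.repr w 1 = 0 →
      R ![x1, x2, w, z] = 0 := by
    intro x1 x2 w z h0 h1
    rw [Rexp2 b R, Fin.sum_univ_four, h0, h1,
      hA 2 (Or.inl rfl), hA 3 (Or.inr rfl)]
    simp
  constructor
  · intro f1 f2 _ _ _ Rop hRop
    have key : ∀ y, Rop (Rop y) = 0 := by
      intro y
      apply nondeg
      intro z
      rw [hRop]
      refine hB f1 f2 (Rop y) z ?_ ?_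
      · rw [c0, hRop]
        exact hA' 3 (Or.inr rfl) f1 f2 y
      · rw [c1, hRop]
        exact hA' 2 (Or.inl rfl) f1 f2 y
    refine LinearMap.ext fun y => ?_
    simp [pow_two, Module.End.mul_apply, key y]
  · refine ⟨b 0 + ((1 - c)/2) • b 3, b 1 + (1/2 : ℝ) • b 2, ?_, ?_, ?_, ?_⟩
    · left
      simp [map_add, map_smul, gb, Matrix.of_apply]
      ring
    · left
      simp [map_add, map_smul, gb, Matrix.of_apply]
      norm_num
    · simp [map_add, map_smul, gb, Matrix.of_apply]
    · intro Rop hRop hzero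
      have h1 : g (Rop (b 1)) (b 0)
          = R ![b 0 + ((1 - c)/2) • b 3, b 1 + (1/2 : ℝ) • b 2, b 1, b 0] :=
        hRop _ _
      rw [hzero] at h1
      simp only [LinearMap.zero_apply, map_zero] at h1
      rw [Radd0, Rsmul0, Radd1, Radd1, Rsmul1, Rsmul1] at h1
      rw [hval, hvanish 0 2 1 0 (by decide), hvanish 3 1 1 0 (by decide),
        hvanish 3 2 1 0 (by decide)] at h1
      simp at h1
end

section
/- Let {X,T,U,V,Y} be a basis of ℝ^5 and c ∈ ℝ. Let g be the symmetric bilinear form with g(X,X) = c, g(T,T) = 1, g(U,V) = 1, g(X,Y) = 1, all other products 0, and let R be the 4-linear form whose only nonzero components, up to the symmetries R(x_1,x_2,x_3,x_4) = −R(x_2,x_1,x_3,x_4) = −R(x_1,x_2,x_4,x_3) = R(x_3,x_4,x_1,x_2), are R(X,U,U,X) = 1 and R(X,U,T,X) = 1. Then for every pair f_1, f_2 ∈ ℝ^5 with g(f_1,f_1) = ±1, g(f_2,f_2) = ±1 and g(f_1,f_2) = 0, the skew-symmetric curvature operator satisfies ℛ(f_1,f_2)³ = 0; moreover there exists such a pair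 with ℛ(f_1,f_2)² ≠ 0. -/
/-- for the inner product with `g(X,X) = c`, `g(T,T) = 1`,
`g(U,V) = g(X,Y) = 1` on `ℝ⁵` (basis `X = b 0`, `T = b 1`, `U = b 2`, `V = b 3`,
`Y = b 4`) and the 4-linear form with `R(X,U,U,X) = R(X,U,T,X) = 1` as its only nonzero
components up to the usual symmetries, the skew-symmetric curvature operator satisfies
`ℛ(f₁,f₂)³ = 0` for every orthonormal pair `(f₁,f₂)`, and `ℛ(f₁,f₂)² ≠ 0` for some such
pair. -/
theorem ip_nilpotent_order_three_R5
    (b : Module.Basis (Fin 5) ℝ (Fin 5 → ℝ)) (c : ℝ)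
    (g : (Fin 5 → ℝ) →ₗ[ℝ] (Fin 5 → ℝ) →ₗ[ℝ] ℝ)
    (hgsym : ∀ v w, g v w = g w v)
    (hgXX : g (b 0) (b 0) = c)
    (hgTT : g (b 1) (b 1) = 1)
    (hgUV : g (b 2) (b 3) = 1)
    (hgXY : g (b 0) (b 4) = 1)
    (hg0 : ∀ i j : Fin 5,
      ¬((i = 0 ∧ j = 0) ∨ (i = 1 ∧ j = 1) ∨ (i = 2 ∧ j = 3) ∨ (i = 3 ∧ j = 2) ∨
        (i = 0 ∧ j = 4) ∨ (i = 4 ∧ j = 0)) →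
      g (b i) (b j) = 0)
    (R : MultilinearMap ℝ (fun _ : Fin 4 => (Fin 5 → ℝ)) ℝ)
    (hsym1 : ∀ x₁ x₂ x₃ x₄, R ![x₁, x₂, x₃, x₄] = -R ![x₂, x₁, x₃, x₄])
    (hsym2 : ∀ x₁ x₂ x₃ x₄, R ![x₁, x₂, x₃, x₄] = -R ![x₁, x₂, x₄, x₃])
    (hsym3 : ∀ x₁ x₂ x₃ x₄, R ![x₁, x₂, x₃, x₄] = R ![x₃, x₄, x₁, x₂])
    (hval1 : R ![b 0, b 2, b 2, b 0] = 1)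
    (hval2 : R ![b 0, b 2, b 1, b 0] = 1)
    (hvanish : ∀ i₁ i₂ i₃ i₄ : Fin 5,
      ¬(∃ w₁ w₂ : Fin 5,
        ((i₁ = 0 ∧ i₂ = w₁) ∨ (i₂ = 0 ∧ i₁ = w₁)) ∧
        ((i₃ = 0 ∧ i₄ = w₂) ∨ (i₄ = 0 ∧ i₃ = w₂)) ∧
        ((w₁ = 2 ∧ w₂ = 2) ∨ (w₁ = 2 ∧ w₂ = 1) ∨ (w₁ = 1 ∧ w₂ = 2))) →
      R ![b i₁, b i₂, b i₃, b i₄] = 0) :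
    (∀ f₁ f₂ : Fin 5 → ℝ,
      (g f₁ f₁ = 1 ∨ g f₁ f₁ = -1) → (g f₂ f₂ = 1 ∨ g f₂ f₂ = -1) → g f₁ f₂ = 0 →
      ∀ Rop : Module.End ℝ (Fin 5 → ℝ),
        (∀ y z, g (Rop y) z = R ![f₁, f₂, y, z]) → Rop ^ 3 = 0) ∧
    (∃ f₁ f₂ : Fin 5 → ℝ,
      (g f₁ f₁ = 1 ∨ g f₁ f₁ = -1) ∧ (g f₂ f₂ = 1 ∨ g f₂ f₂ = -1) ∧ g f₁ f₂ = 0 ∧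
      ∀ Rop : Module.End ℝ (Fin 5 → ℝ),
        (∀ y z, g (Rop y) z = R ![f₁, f₂, y, z]) → Rop ^ 2 ≠ 0) := by
  -- update lemmas
  have upd0 : ∀ (u v y z u' : Fin 5 → ℝ),
      Function.update ![u, v, y, z] 0 u' = ![u', v, y, z] := by
    intro u v y z u'; funext i; fin_cases i <;> simp
  have upd1 : ∀ (u v y z v' : Fin 5 → ℝ),
      Function.update ![u, v, y, z] 1 v' = ![u, v', y, z] := by
    intro u v y z v'; funext i; fin_cases i <;> simp
  have upd2 : ∀ (u v y z y' : Fin 5 → ℝ),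
      Function.update ![u, v, y, z] 2 y' = ![u, v, y', z] := by
    intro u v y z y'; funext i; fin_cases i <;> simp
  -- expansion lemmas
  have ex0 : ∀ (u v y z : Fin 5 → ℝ),
      R ![u, v, y, z] = ∑ k : Fin 5, b.repr u k • R ![b k, v, y, z] := by
    intro u v y z
    have h1 : R ![u, v, y, z]
        = R (Function.update ![u, v, y, z] 0 (∑ k : Fin 5, b.repr u k • b k)) := by
      rw [b.sum_repr, upd0]
    rw [h1, R.map_update_sum]
    refine Finset.sum_congr rfl fun k _ => ?_
    rw [R.map_update_smul, upd0]
  have ex1 : ∀ (u v y z : Fin 5 → ℝ),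
      R ![u, v, y, z] = ∑ k : Fin 5, b.repr v k • R ![u, b k, y, z] := by
    intro u v y z
    have h1 : R ![u, v, y, z]
        = R (Function.update ![u, v, y, z] 1 (∑ k : Fin 5, b.repr v k • b k)) := by
      rw [b.sum_repr, upd1]
    rw [h1, R.map_update_sum]
    refine Finset.sum_congr rfl fun k _ => ?_
    rw [R.map_update_smul, upd1]
  have ex2 : ∀ (u v y z : Fin 5 → ℝ),
      R ![u, v, y, z] = ∑ k : Fin 5, b.repr y k • R ![u, v, b k, z] := by
    intro u v y z
    have h1 : R ![u, v, y, z]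
        = R (Function.update ![u, v, y, z] 2 (∑ k : Fin 5, b.repr y k • b k)) := by
      rw [b.sum_repr, upd2]
    rw [h1, R.map_update_sum]
    refine Finset.sum_congr rfl fun k _ => ?_
    rw [R.map_update_smul, upd2]
  -- g expansion
  have gexp : ∀ (v : Fin 5 → ℝ) (j : Fin 5),
      g v (b j) = ∑ i : Fin 5, b.repr v i * g (b i) (b j) := by
    intro v j
    conv_lhs => rw [← b.sum_repr v]
    rw [map_sum, LinearMap.sum_apply]
    refine Finset.sum_congr rfl fun i _ => ?_
    rw [map_smul, LinearMap.smul_apply, smul_eq_mul]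
  have g40 : g (b 4) (b 0) = 1 := by rw [hgsym]; exact hgXY
  have g32 : g (b 3) (b 2) = 1 := by rw [hgsym]; exact hgUV
  have gv0 : ∀ v, g v (b 0) = c * b.repr v 0 + b.repr v 4 := by
    intro v
    rw [gexp, Fin.sum_univ_five, hgXX, hg0 1 0 (by decide), hg0 2 0 (by decide),
      hg0 3 0 (by decide), g40]
    ring
  have gv1 : ∀ v, g v (b 1) = b.repr v 1 := by
    intro v
    rw [gexp, Fin.sum_univ_five, hgTT, hg0 0 1 (by decide), hg0 2 1 (by decide),
      hg0 3 1 (by decide), hg0 4 1 (by decide)]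
    ring
  have gv2 : ∀ v, g v (b 2) = b.repr v 3 := by
    intro v
    rw [gexp, Fin.sum_univ_five, g32, hg0 0 2 (by decide), hg0 1 2 (by decide),
      hg0 2 2 (by decide), hg0 4 2 (by decide)]
    ring
  have gv3 : ∀ v, g v (b 3) = b.repr v 2 := by
    intro v
    rw [gexp, Fin.sum_univ_five, hgUV, hg0 0 3 (by decide), hg0 1 3 (by decide),
      hg0 3 3 (by decide), hg0 4 3 (by decide)]
    ring
  have gv4 : ∀ v, g v (b 4) = b.repr v 0 := by
    intro v
    rw [gexp, Fin.sum_univ_five, hgXY, hg0 1 4 (by decide), hg0 2 4 (by decide),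
      hg0 3 4 (by decide), hg0 4 4 (by decide)]
    ring
  -- vanishing of basis components of R with bad last two indices
  have hv' : ∀ k l j i : Fin 5,
      ¬((j = 0 ∧ (i = 1 ∨ i = 2)) ∨ (i = 0 ∧ (j = 1 ∨ j = 2))) →
      R ![b k, b l, b j, b i] = 0 := by
    intro k l j i h
    apply hvanish
    rintro ⟨w₁, w₂, -, h2, h3⟩
    apply h
    have hw : w₂ = 1 ∨ w₂ = 2 := by
      rcases h3 with ⟨-, h⟩ | ⟨-, h⟩ | ⟨-, h⟩
      · right; exact h
      · left; exact h
      · right; exact h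
    rcases h2 with ⟨hj, hi⟩ | ⟨hi, hj⟩
    · left; exact ⟨hj, by rw [hi]; exact hw⟩
    · right; exact ⟨hi, by rw [hj]; exact hw⟩
  -- the same vanishing with arbitrary first two arguments
  have Zuv : ∀ (j i : Fin 5),
      ¬((j = 0 ∧ (i = 1 ∨ i = 2)) ∨ (i = 0 ∧ (j = 1 ∨ j = 2))) →
      ∀ (u v : Fin 5 → ℝ), R ![u, v, b j, b i] = 0 := by
    intro j i h u v
    rw [ex0]
    refine Finset.sum_eq_zero fun k _ => ?_
    rw [ex1]
    rw [Finset.sum_eq_zero (fun l _ => ?_), smul_zero]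
    rw [hv' k l j i h, smul_zero]
  have diag : ∀ (u v w : Fin 5 → ℝ), R ![u, v, w, w] = 0 := by
    intro u v w
    have := hsym2 u v w w
    linarith
  -- key component formulas, for arbitrary u v y
  have key4 : ∀ (u v y : Fin 5 → ℝ), R ![u, v, y, b 4] = 0 := by
    intro u v y
    rw [ex2]
    refine Finset.sum_eq_zero fun j _ => ?_
    rw [Zuv j 4 (by rintro (⟨-, h | h⟩ | ⟨h, -⟩) <;> exact absurd h (by decide)), smul_zero]
  have key3 : ∀ (u v y : Fin 5 → ℝ), R ![u, v, y, b 3] = 0 := by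
    intro u v y
    rw [ex2]
    refine Finset.sum_eq_zero fun j _ => ?_
    rw [Zuv j 3 (by rintro (⟨-, h | h⟩ | ⟨h, -⟩) <;> exact absurd h (by decide)), smul_zero]
  have key2 : ∀ (u v y : Fin 5 → ℝ),
      R ![u, v, y, b 2] = b.repr y 0 * R ![u, v, b 0, b 2] := by
    intro u v y
    rw [ex2, Fin.sum_univ_five, Zuv 1 2 (by decide) u v, Zuv 2 2 (by decide) u v,
      Zuv 3 2 (by decide) u v, Zuv 4 2 (by decide) u v]
    simp [smul_eq_mul]
  have key1 : ∀ (u v y : Fin 5 → ℝ),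
      R ![u, v, y, b 1] = b.repr y 0 * R ![u, v, b 0, b 1] := by
    intro u v y
    rw [ex2, Fin.sum_univ_five, Zuv 1 1 (by decide) u v, Zuv 2 1 (by decide) u v,
      Zuv 3 1 (by decide) u v, Zuv 4 1 (by decide) u v]
    simp [smul_eq_mul]
  have key0 : ∀ (u v y : Fin 5 → ℝ),
      R ![u, v, y, b 0]
        = -(b.repr y 1 * R ![u, v, b 0, b 1]) - b.repr y 2 * R ![u, v, b 0, b 2] := by
    intro u v y
    rw [ex2, Fin.sum_univ_five, diag u v (b 0), hsym2 u v (b 1) (b 0),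
      hsym2 u v (b 2) (b 0), Zuv 3 0 (by decide) u v, Zuv 4 0 (by decide) u v]
    simp [smul_eq_mul]
    ring
  -- main structural result for any pair (u, v)
  have main : ∀ (u v : Fin 5 → ℝ) (Rop : Module.End ℝ (Fin 5 → ℝ)),
      (∀ y z, g (Rop y) z = R ![u, v, y, z]) →
      (Rop ^ 3 = 0) ∧
      (∀ y, Rop (Rop y)
        = (-(b.repr y 0 * (R ![u, v, b 0, b 1] * R ![u, v, b 0, b 1]))) • b 4) := by
    intro u v Rop hRop
    set α := R ![u, v, b 0, b 2] with hα
    set β := R ![u, v, b 0, b 1] with hβ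
    have r0 : ∀ y, b.repr (Rop y) 0 = 0 := by
      intro y; rw [← gv4, hRop, key4]
    have r1 : ∀ y, b.repr (Rop y) 1 = b.repr y 0 * β := by
      intro y; rw [← gv1, hRop, key1]
    have r2 : ∀ y, b.repr (Rop y) 2 = 0 := by
      intro y; rw [← gv3, hRop, key3]
    have r3 : ∀ y, b.repr (Rop y) 3 = b.repr y 0 * α := by
      intro y; rw [← gv2, hRop, key2]
    have r4 : ∀ y, b.repr (Rop y) 4 = -(b.repr y 1 * β) - b.repr y 2 * α := by
      intro y
      have h := gv0 (Rop y)
      rw [hRop, key0, r0 y, mul_zero, zero_add] at h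
      exact h.symm
    have hform : ∀ y, Rop y = (b.repr y 0 * β) • b 1 + (b.repr y 0 * α) • b 3 +
        (-(b.repr y 1 * β) - b.repr y 2 * α) • b 4 := by
      intro y
      conv_lhs => rw [← b.sum_repr (Rop y)]
      rw [Fin.sum_univ_five, r0, r1, r2, r3, r4]
      simp
    have hsq : ∀ y, Rop (Rop y) = (-(b.repr y 0 * (β * β))) • b 4 := by
      intro y
      rw [hform (Rop y), r0 y, r1 y, r2 y]
      simp
      ring_nf
    refine ⟨?_, hsq⟩
    refine LinearMap.ext fun y => ?_
    rw [LinearMap.zero_apply]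
    have h3 : (Rop ^ 3) y = Rop (Rop (Rop y)) := by
      simp [pow_succ, Module.End.mul_apply]
    rw [h3, hform (Rop (Rop y))]
    have e0 : b.repr (Rop (Rop y)) 0 = 0 := r0 (Rop y)
    have e1 : b.repr (Rop (Rop y)) 1 = 0 := by rw [r1 (Rop y), r0 y, zero_mul]
    have e2 : b.repr (Rop (Rop y)) 2 = 0 := r2 (Rop y)
    rw [e0, e1, e2]
    simp
  constructor
  · intro f₁ f₂ _ _ _ Rop hRop
    exact (main f₁ f₂ Rop hRop).1
  · refine ⟨b 0 + ((1 - c) / 2) • b 4, b 2 + (1 / 2 : ℝ) • b 3, ?_, ?_, ?_, ?_⟩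
    · left
      simp only [map_add, map_smul, LinearMap.add_apply, LinearMap.smul_apply, smul_eq_mul]
      rw [hgXX, hgXY, g40, hg0 4 4 (by decide)]
      ring
    · left
      simp only [map_add, map_smul, LinearMap.add_apply, LinearMap.smul_apply, smul_eq_mul]
      rw [hgUV, g32, hg0 2 2 (by decide), hg0 3 3 (by decide)]
      ring
    · simp only [map_add, map_smul, LinearMap.add_apply, LinearMap.smul_apply, smul_eq_mul]
      rw [hg0 0 2 (by decide), hg0 0 3 (by decide), hg0 4 2 (by decide),
        hg0 4 3 (by decide)]
      ring
    · intro Rop hRop hsq0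
      -- multilinearity in the first two slots
      have add0 : ∀ (u u' v y z : Fin 5 → ℝ),
          R ![u + u', v, y, z] = R ![u, v, y, z] + R ![u', v, y, z] := by
        intro u u' v y z
        have := R.map_update_add ![u, v, y, z] 0 u u'
        rwa [upd0, upd0, upd0] at this
      have smul0 : ∀ (a : ℝ) (u v y z : Fin 5 → ℝ),
          R ![a • u, v, y, z] = a • R ![u, v, y, z] := by
        intro a u v y z
        have := R.map_update_smul ![u, v, y, z] 0 a u
        rwa [upd0, upd0] at this
      have add1 : ∀ (u v v' y z : Fin 5 → ℝ),
          R ![u, v + v', y, z] = R ![u, v, y, z] + R ![u, v', y, z] := by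
        intro u v v' y z
        have := R.map_update_add ![u, v, y, z] 1 v v'
        rwa [upd1, upd1, upd1] at this
      have smul1 : ∀ (a : ℝ) (u v y z : Fin 5 → ℝ),
          R ![u, a • v, y, z] = a • R ![u, v, y, z] := by
        intro a u v y z
        have := R.map_update_smul ![u, v, y, z] 1 a v
        rwa [upd1, upd1] at this
      have hbeta : R ![b 0 + ((1 - c) / 2) • b 4, b 2 + (1 / 2 : ℝ) • b 3, b 0, b 1]
          = -1 := by
        rw [add0, smul0, add1, add1, smul1, smul1]
        rw [hvanish 0 3 0 1 (by decide), hvanish 4 2 0 1 (by decide),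
          hvanish 4 3 0 1 (by decide)]
        rw [hsym2 (b 0) (b 2) (b 0) (b 1), hval2]
        simp
      have hsq := (main _ _ Rop hRop).2 (b 0)
      rw [hbeta] at hsq
      have hr00 : b.repr (b 0) 0 = 1 := by simp
      rw [hr00] at hsq
      have hz : Rop (Rop (b 0)) = 0 := by
        have : (Rop ^ 2) (b 0) = 0 := by rw [hsq0]; rfl
        rw [pow_two, Module.End.mul_apply] at this
        exact this
      rw [hz] at hsq
      have : (-(1 * (-1 * -1)) : ℝ) • b 4 = 0 := hsq.symm
      simp at this
      exact (Module.Basis.ne_zero b 4) this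
end

section
/- Let ℓ ≥ 2, let {X, T, U_2,…,U_{ℓ+1}, V_2,…,V_{ℓ+1}, Y} be a basis of ℝ^{2ℓ+3}, and let c ∈ ℝ. Let g be the symmetric bilinear form with g(X,X) = c, g(X,Y) = 1, g(T,T) = 1, g(U_a,V_b) = δ_{ab}, all other products 0, and let R be the 4-linear form whose only nonzero components, up to the symmetries R(x_1,x_2,x_3,x_4) = −R(x_2,x_1,x_3,x_4) = −R(x_1,x_2,x_4,x_3) = R(x_3,x_4,x_1,x_2), are R(X,U_2,U_2,X) = R(X,T,U_2,X) = 1 and, for 2 ≤ a ≤ ℓ, R(X,U_{a+1},U_{a+1},X) = R(X,U_{a+1},U_a,X) = R(X,U_{a+1},V_a,X) = 1. Then for every pair f_1, f_2 with g(f_1,f_1) = ±1, g(f_2,f_2) = ±1 and g(f_1,f_2) = 0, the skew-symmetric curvature operator satisfies ℛ(f_1,f_2)³ = 0; moreover there exists such a pair with ℛ(f_1,f_2)² ≠ 0. -/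
section helpers
variable {n : ℕ} (R : MultilinearMap ℝ (fun _ : Fin 4 => (Fin n → ℝ)) ℝ)

private lemma upd0_s18 (a b c d x : Fin n → ℝ) : Function.update ![a,b,c,d] 0 x = ![x,b,c,d] := by
  funext i; fin_cases i <;> simp [Function.update]

private lemma upd1_s18 (a b c d x : Fin n → ℝ) : Function.update ![a,b,c,d] 1 x = ![a,x,c,d] := by
  funext i; fin_cases i <;> simp [Function.update]

private lemma upd2_s18 (a b c d x : Fin n → ℝ) : Function.update ![a,b,c,d] 2 x = ![a,b,x,d] := by
  funext i; fin_cases i <;> simp [Function.update]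

private lemma expand_ff (a a' u v x₃ x₄ : Fin n → ℝ) (r h : ℝ) :
    R ![a + r • a', u + h • v, x₃, x₄] =
      R ![a,u,x₃,x₄] + h * R ![a,v,x₃,x₄] + r * R ![a',u,x₃,x₄] + r * (h * R ![a',v,x₃,x₄]) := by
  have s1 : ∀ w : Fin n → ℝ, R ![w, u + h • v, x₃, x₄] = R ![w,u,x₃,x₄] + h * R ![w,v,x₃,x₄] := by
    intro w
    rw [← upd1_s18 w u x₃ x₄ (u + h • v), R.map_update_add, R.map_update_smul, upd1_s18, upd1_s18,
      smul_eq_mul]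
  rw [← upd0_s18 a (u + h • v) x₃ x₄ (a + r • a'), R.map_update_add, R.map_update_smul,
    upd0_s18, upd0_s18, smul_eq_mul, s1, s1]
  ring

private lemma vec4_eq (f : Fin 4 → (Fin n → ℝ)) : f = ![f 0, f 1, f 2, f 3] := by
  funext i; fin_cases i <;> rfl

private lemma mlin_expand (b : Module.Basis (Fin n) ℝ (Fin n → ℝ)) (x : Fin 4 → (Fin n → ℝ)) :
    R x = ∑ p : Fin 4 → Fin n, (∏ i, b.repr (x i) (p i)) •
      R ![b (p 0), b (p 1), b (p 2), b (p 3)] := by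
  conv_lhs => rw [show x = fun i => ∑ j, b.repr (x i) j • b j from
    funext fun i => (b.sum_repr (x i)).symm]
  rw [R.map_sum]
  refine Finset.sum_congr rfl fun p _ => ?_
  rw [R.map_smul_univ]
  congr 1
  exact congrArg R (vec4_eq fun i => b (p i))

private lemma mlin_expand3 (b : Module.Basis (Fin n) ℝ (Fin n → ℝ)) (x₁ x₂ u x₄ : Fin n → ℝ) :
    R ![x₁, x₂, u, x₄] = ∑ i, b.repr u i • R ![x₁, x₂, b i, x₄] := by
  have h : R ![x₁, x₂, u, x₄] = R (Function.update ![x₁,x₂,u,x₄] 2 (∑ i, b.repr u i • b i)) := by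
    rw [b.sum_repr u, upd2_s18]
  rw [h, R.map_update_sum]
  refine Finset.sum_congr rfl fun i _ => ?_
  rw [R.map_update_smul, upd2_s18]

end helpers

set_option maxHeartbeats 2000000 in
/-- the odd-dimensional Ivanov-Petrova example. On `ℝ^{2ℓ+3}` with basis
`X = b 0`, `T = b 1`, `U_a = b a` (`2 ≤ a ≤ ℓ+1`), `V_a = b (ℓ+a)` (`2 ≤ a ≤ ℓ+1`),
`Y = b (2ℓ+2)`, take `g(X,X) = c`, `g(X,Y) = 1`, `g(T,T) = 1`, `g(U_a,V_b) = δ_{ab}`, all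
other products `0`, and the 4-linear form `R` whose only nonzero components up to the
usual symmetries are `R(X,U₂,U₂,X) = R(X,T,U₂,X) = 1` and, for `2 ≤ a ≤ ℓ`,
`R(X,U_{a+1},U_{a+1},X) = R(X,U_{a+1},U_a,X) = R(X,U_{a+1},V_a,X) = 1`. Then the
skew-symmetric curvature operator satisfies `ℛ(f₁,f₂)³ = 0` for every orthonormal pair
`(f₁,f₂)`, and `ℛ(f₁,f₂)² ≠ 0` for some such pair. -/
theorem ip_nilpotent_order_three_odd_dim (l : ℕ) (hl : 2 ≤ l)
    (b : Module.Basis (Fin (2 * l + 3)) ℝ (Fin (2 * l + 3) → ℝ)) (c : ℝ)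
    (g : (Fin (2 * l + 3) → ℝ) →ₗ[ℝ] (Fin (2 * l + 3) → ℝ) →ₗ[ℝ] ℝ)
    (hgsym : ∀ v w, g v w = g w v)
    (hgXX : g (b ⟨0, by omega⟩) (b ⟨0, by omega⟩) = c)
    (hgXY : g (b ⟨0, by omega⟩) (b ⟨2 * l + 2, by omega⟩) = 1)
    (hgTT : g (b ⟨1, by omega⟩) (b ⟨1, by omega⟩) = 1)
    (hgUV : ∀ (a a' : ℕ) (ha : 2 ≤ a) (ha' : a ≤ l + 1) (hb : 2 ≤ a') (hb' : a' ≤ l + 1),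
      g (b ⟨a, by omega⟩) (b ⟨l + a', by omega⟩) = if a = a' then 1 else 0)
    (hg0 : ∀ i j : Fin (2 * l + 3),
      ¬((i.1 = 0 ∧ j.1 = 0) ∨ (i.1 = 0 ∧ j.1 = 2 * l + 2) ∨ (j.1 = 0 ∧ i.1 = 2 * l + 2) ∨
        (i.1 = 1 ∧ j.1 = 1) ∨
        (2 ≤ i.1 ∧ i.1 ≤ l + 1 ∧ j.1 = l + i.1) ∨
        (2 ≤ j.1 ∧ j.1 ≤ l + 1 ∧ i.1 = l + j.1)) →
      g (b i) (b j) = 0)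
    (R : MultilinearMap ℝ (fun _ : Fin 4 => (Fin (2 * l + 3) → ℝ)) ℝ)
    (hsym1 : ∀ x₁ x₂ x₃ x₄, R ![x₁, x₂, x₃, x₄] = -R ![x₂, x₁, x₃, x₄])
    (hsym2 : ∀ x₁ x₂ x₃ x₄, R ![x₁, x₂, x₃, x₄] = -R ![x₁, x₂, x₄, x₃])
    (hsym3 : ∀ x₁ x₂ x₃ x₄, R ![x₁, x₂, x₃, x₄] = R ![x₃, x₄, x₁, x₂])
    (hval1 : R ![b ⟨0, by omega⟩, b ⟨2, by omega⟩, b ⟨2, by omega⟩, b ⟨0, by omega⟩] = 1)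
    (hval2 : R ![b ⟨0, by omega⟩, b ⟨1, by omega⟩, b ⟨2, by omega⟩, b ⟨0, by omega⟩] = 1)
    (hval3 : ∀ (a : ℕ) (ha : 2 ≤ a) (ha' : a ≤ l),
      R ![b ⟨0, by omega⟩, b ⟨a + 1, by omega⟩, b ⟨a + 1, by omega⟩, b ⟨0, by omega⟩] = 1)
    (hval4 : ∀ (a : ℕ) (ha : 2 ≤ a) (ha' : a ≤ l),
      R ![b ⟨0, by omega⟩, b ⟨a + 1, by omega⟩, b ⟨a, by omega⟩, b ⟨0, by omega⟩] = 1)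
    (hval5 : ∀ (a : ℕ) (ha : 2 ≤ a) (ha' : a ≤ l),
      R ![b ⟨0, by omega⟩, b ⟨a + 1, by omega⟩, b ⟨l + a, by omega⟩, b ⟨0, by omega⟩] = 1)
    (hvanish : ∀ i₁ i₂ i₃ i₄ : Fin (2 * l + 3),
      ¬(∃ w₁ w₂ : ℕ,
        ((i₁.1 = 0 ∧ i₂.1 = w₁) ∨ (i₂.1 = 0 ∧ i₁.1 = w₁)) ∧
        ((i₃.1 = 0 ∧ i₄.1 = w₂) ∨ (i₄.1 = 0 ∧ i₃.1 = w₂)) ∧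
        ((w₁ = 2 ∧ w₂ = 2) ∨ (w₁ = 2 ∧ w₂ = 1) ∨ (w₁ = 1 ∧ w₂ = 2) ∨
         ∃ a : ℕ, 2 ≤ a ∧ a ≤ l ∧
           ((w₁ = a + 1 ∧ w₂ = a + 1) ∨ (w₁ = a + 1 ∧ w₂ = a) ∨ (w₁ = a ∧ w₂ = a + 1) ∨
            (w₁ = a + 1 ∧ w₂ = l + a) ∨ (w₁ = l + a ∧ w₂ = a + 1)))) →
      R ![b i₁, b i₂, b i₃, b i₄] = 0) :
    (∀ f₁ f₂ : Fin (2 * l + 3) → ℝ,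
      (g f₁ f₁ = 1 ∨ g f₁ f₁ = -1) → (g f₂ f₂ = 1 ∨ g f₂ f₂ = -1) → g f₁ f₂ = 0 →
      ∀ Rop : Module.End ℝ (Fin (2 * l + 3) → ℝ),
        (∀ y z, g (Rop y) z = R ![f₁, f₂, y, z]) → Rop ^ 3 = 0) ∧
    (∃ f₁ f₂ : Fin (2 * l + 3) → ℝ,
      (g f₁ f₁ = 1 ∨ g f₁ f₁ = -1) ∧ (g f₂ f₂ = 1 ∨ g f₂ f₂ = -1) ∧ g f₁ f₂ = 0 ∧
      ∀ Rop : Module.End ℝ (Fin (2 * l + 3) → ℝ),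
        (∀ y z, g (Rop y) z = R ![f₁, f₂, y, z]) → Rop ^ 2 ≠ 0) := by
  classical
  -- expansion of g in first slot
  have hgexp : ∀ (w : Fin (2*l+3) → ℝ) (j : Fin (2*l+3)),
      g w (b j) = ∑ k, b.repr w k * g (b k) (b j) := by
    intro w j
    conv_lhs => rw [← b.sum_repr w]
    rw [map_sum, LinearMap.sum_apply]
    refine Finset.sum_congr rfl fun k _ => ?_
    rw [map_smul, LinearMap.smul_apply, smul_eq_mul]
  -- column lemmas
  have colY : ∀ w, g w (b ⟨2*l+2, by omega⟩) = b.repr w ⟨0, by omega⟩ := by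
    intro w
    rw [hgexp, Finset.sum_eq_single (⟨0, by omega⟩ : Fin (2*l+3))
      (fun k _ hk => by
        rw [hg0 k ⟨2*l+2, by omega⟩ ?_, mul_zero]
        have hk1 : k.1 ≠ 0 := fun h => hk (Fin.ext h)
        have hk2 := k.2
        simp only []; omega)
      (fun h => absurd (Finset.mem_univ _) h)]
    rw [hgXY, mul_one]
  have colT : ∀ w, g w (b ⟨1, by omega⟩) = b.repr w ⟨1, by omega⟩ := by
    intro w
    rw [hgexp, Finset.sum_eq_single (⟨1, by omega⟩ : Fin (2*l+3))
      (fun k _ hk => by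
        rw [hg0 k ⟨1, by omega⟩ ?_, mul_zero]
        have hk1 : k.1 ≠ 1 := fun h => hk (Fin.ext h)
        have hk2 := k.2
        simp only []; omega)
      (fun h => absurd (Finset.mem_univ _) h)]
    rw [hgTT, mul_one]
  have colU : ∀ w (a : ℕ) (h2 : 2 ≤ a) (h1 : a ≤ l+1),
      g w (b ⟨l+a, by omega⟩) = b.repr w ⟨a, by omega⟩ := by
    intro w a h2 h1
    rw [hgexp, Finset.sum_eq_single (⟨a, by omega⟩ : Fin (2*l+3))
      (fun k _ hk => by
        rw [hg0 k ⟨l+a, by omega⟩ ?_, mul_zero]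
        have hk1 : k.1 ≠ a := fun h => hk (Fin.ext h)
        have hk2 := k.2
        simp only []; omega)
      (fun h => absurd (Finset.mem_univ _) h)]
    rw [hgUV a a h2 h1 h2 h1, if_pos rfl, mul_one]
  have colV : ∀ w (a : ℕ) (h2 : 2 ≤ a) (h1 : a ≤ l+1),
      g w (b ⟨a, by omega⟩) = b.repr w ⟨l+a, by omega⟩ := by
    intro w a h2 h1
    rw [hgexp, Finset.sum_eq_single (⟨l+a, by omega⟩ : Fin (2*l+3))
      (fun k _ hk => by
        rw [hg0 k ⟨a, by omega⟩ ?_, mul_zero]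
        have hk1 : k.1 ≠ l+a := fun h => hk (Fin.ext h)
        have hk2 := k.2
        simp only []; omega)
      (fun h => absurd (Finset.mem_univ _) h)]
    rw [hgsym, hgUV a a h2 h1 h2 h1, if_pos rfl, mul_one]
  have colX : ∀ w, g w (b ⟨0, by omega⟩) =
      c * b.repr w ⟨0, by omega⟩ + b.repr w ⟨2*l+2, by omega⟩ := by
    intro w
    rw [hgexp]
    have key : ∀ k : Fin (2*l+3), b.repr w k * g (b k) (b ⟨0, by omega⟩) =
        (if k = ⟨0, by omega⟩ then c * b.repr w ⟨0, by omega⟩ else 0) +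
        (if k = ⟨2*l+2, by omega⟩ then b.repr w ⟨2*l+2, by omega⟩ else 0) := by
      intro k
      by_cases h0 : k = ⟨0, by omega⟩
      · subst h0
        rw [if_pos rfl, if_neg (by intro h; have := congrArg Fin.val h; simp only [] at this; omega),
          hgXX, add_zero, mul_comm]
      · by_cases hY : k = ⟨2*l+2, by omega⟩
        · subst hY
          rw [if_neg h0, if_pos rfl, hgsym, hgXY, mul_one, zero_add]
        · rw [hg0 k ⟨0, by omega⟩ ?_, mul_zero, if_neg h0, if_neg hY, add_zero]
          have hk1 : k.1 ≠ 0 := fun h => h0 (Fin.ext h)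
          have hk2 : k.1 ≠ 2*l+2 := fun h => hY (Fin.ext h)
          have hk3 := k.2
          simp only []; omega
    rw [Finset.sum_congr rfl fun k _ => key k, Finset.sum_add_distrib,
      Finset.sum_ite_eq' Finset.univ, Finset.sum_ite_eq' Finset.univ,
      if_pos (Finset.mem_univ _), if_pos (Finset.mem_univ _)]
  -- nondegeneracy
  have hND : ∀ w : Fin (2*l+3) → ℝ, (∀ j, g w (b j) = 0) → w = 0 := by
    intro w hw
    have h0 : b.repr w ⟨0, by omega⟩ = 0 := by rw [← colY w]; exact hw _
    have hrest : ∀ k : Fin (2*l+3), b.repr w k = 0 := by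
      intro k
      rcases k with ⟨k, hk⟩
      by_cases e0 : k = 0
      · subst e0; exact h0
      by_cases e1 : k = 1
      · subst e1; rw [← colT w]; exact hw _
      by_cases eY : k = 2*l+2
      · subst eY
        have hx := (colX w).symm.trans (hw _)
        rw [h0, mul_zero, zero_add] at hx
        exact hx
      by_cases e2 : k ≤ l+1
      · have h := (colU w k (by omega) (by omega)).symm.trans (hw _)
        exact h
      · have h := (colV w (k - l) (by omega) (by omega)).symm.trans (hw _)
        have e : (⟨l + (k - l), by omega⟩ : Fin (2*l+3)) = ⟨k, hk⟩ :=
          Fin.ext (by show l + (k - l) = k; omega)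
        rw [e] at h
        exact h
    exact b.repr.map_eq_zero_iff.mp (by ext k; simpa using hrest k)
  -- vanishing of R on basis vectors when last two slots avoid X
  have hRB34 : ∀ i₁ i₂ i₃ i₄ : Fin (2*l+3), i₃.1 ≠ 0 → i₄.1 ≠ 0 →
      R ![b i₁, b i₂, b i₃, b i₄] = 0 := by
    intro i₁ i₂ i₃ i₄ h3 h4
    refine hvanish _ _ _ _ ?_
    rintro ⟨w₁, w₂, h1, h2, hP⟩
    rcases hP with hP|hP|hP|⟨a,ha2,hal,hP⟩ <;> omega
  have hRBY : ∀ i₁ i₂ i₃ : Fin (2*l+3), R ![b i₁, b i₂, b i₃, b ⟨2*l+2, by omega⟩] = 0 := by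
    intro i₁ i₂ i₃
    refine hvanish _ _ _ _ ?_
    rintro ⟨w₁, w₂, h1, h2, hP⟩
    simp only [] at h2
    rcases hP with hP|hP|hP|⟨a,ha2,hal,hP⟩ <;> omega
  -- vanishing with arbitrary vectors, Y in last slot
  have hAY : ∀ x₁ x₂ x₃ : Fin (2*l+3) → ℝ, R ![x₁, x₂, x₃, b ⟨2*l+2, by omega⟩] = 0 := by
    intro x₁ x₂ x₃
    rw [mlin_expand R b]
    refine Finset.sum_eq_zero fun p _ => ?_
    by_cases hp : p 3 = ⟨2*l+2, by omega⟩
    · rw [hp, hRBY, smul_zero]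
    · have hz : (∏ i, b.repr (![x₁,x₂,x₃,b ⟨2*l+2, by omega⟩] i) (p i)) = 0 := by
        refine Finset.prod_eq_zero (Finset.mem_univ (3 : Fin 4)) ?_
        show b.repr (b ⟨2*l+2, by omega⟩) (p 3) = 0
        rw [b.repr_self]
        exact Finsupp.single_eq_of_ne (fun h => hp h)
      rw [hz, zero_smul]
  -- vanishing with arbitrary vectors: last two slots have no X-component
  have hA : ∀ x₁ x₂ u v : Fin (2*l+3) → ℝ, b.repr u ⟨0, by omega⟩ = 0 →
      b.repr v ⟨0, by omega⟩ = 0 → R ![x₁, x₂, u, v] = 0 := by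
    intro x₁ x₂ u v hu hv
    rw [mlin_expand R b]
    refine Finset.sum_eq_zero fun p _ => ?_
    by_cases h2 : p 2 = ⟨0, by omega⟩
    · have hz : (∏ i, b.repr (![x₁,x₂,u,v] i) (p i)) = 0 := by
        refine Finset.prod_eq_zero (Finset.mem_univ (2 : Fin 4)) ?_
        show b.repr u (p 2) = 0
        rw [h2, hu]
      rw [hz, zero_smul]
    · by_cases h3 : p 3 = ⟨0, by omega⟩
      · have hz : (∏ i, b.repr (![x₁,x₂,u,v] i) (p i)) = 0 := by
          refine Finset.prod_eq_zero (Finset.mem_univ (3 : Fin 4)) ?_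
          show b.repr v (p 3) = 0
          rw [h3, hv]
        rw [hz, zero_smul]
      · rw [hRB34 _ _ _ _ (fun h => h2 (Fin.ext h)) (fun h => h3 (Fin.ext h)), smul_zero]
  constructor
  · -- Part 1 : Rop ^ 3 = 0
    intro f₁ f₂ _ _ _ Rop hRop
    have hrepr0 : ∀ y, b.repr (Rop y) ⟨0, by omega⟩ = 0 := by
      intro y
      rw [← colY (Rop y), hRop, hAY]
    have hRopY : Rop (b ⟨2*l+2, by omega⟩) = 0 := by
      refine hND _ fun j => ?_
      rw [hRop, hsym2, hAY, neg_zero]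
    have key : ∀ u, Rop (Rop (Rop u)) = 0 := by
      intro u
      have hYj : ∀ j : Fin (2*l+3), j.1 ≠ 0 → g (b ⟨2*l+2, by omega⟩) (b j) = 0 := by
        intro j hj
        refine hg0 _ _ ?_
        have := j.2
        simp only []; omega
      have hveq : Rop (Rop u) = g (Rop (Rop u)) (b ⟨0, by omega⟩) • b ⟨2*l+2, by omega⟩ := by
        have hz := hND (Rop (Rop u) - g (Rop (Rop u)) (b ⟨0, by omega⟩) • b ⟨2*l+2, by omega⟩) ?_
        · exact sub_eq_zero.mp hz
        intro j
        rw [map_sub, LinearMap.sub_apply, map_smul, LinearMap.smul_apply, smul_eq_mul]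
        by_cases hj : j.1 = 0
        · have e : j = ⟨0, by omega⟩ := Fin.ext hj
          rw [e, hgsym (b ⟨2*l+2, by omega⟩) (b ⟨0, by omega⟩), hgXY, mul_one, sub_self]
        · rw [hYj j hj, mul_zero, sub_zero, hRop]
          refine hA _ _ _ _ (hrepr0 u) ?_
          rw [b.repr_self]
          exact Finsupp.single_eq_of_ne (fun h => hj (congrArg Fin.val h).symm)
      rw [hveq, map_smul, hRopY, smul_zero]
    refine LinearMap.ext fun y => ?_
    simp only [pow_succ, pow_zero, one_mul, Module.End.mul_apply, LinearMap.zero_apply]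
    exact key y
  · -- Part 2
    refine ⟨b ⟨0, by omega⟩ + ((1-c)/2) • b ⟨2*l+2, by omega⟩,
            b ⟨l+1, by omega⟩ + ((1:ℝ)/2) • b ⟨2*l+1, by omega⟩, ?_, ?_, ?_, ?_⟩
    · left
      simp only [map_add, map_smul, LinearMap.add_apply, LinearMap.smul_apply, smul_eq_mul]
      rw [hgXX, hgXY, hgsym (b ⟨2*l+2, by omega⟩) (b ⟨0, by omega⟩), hgXY,
        hg0 (⟨2*l+2, by omega⟩ : Fin (2*l+3)) ⟨2*l+2, by omega⟩ (by simp only []; omega)]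
      ring
    · left
      have eUV : g (b ⟨l+1, by omega⟩) (b ⟨2*l+1, by omega⟩) = 1 := by
        have h := hgUV (l+1) (l+1) (by omega) (by omega) (by omega) (by omega)
        rw [if_pos rfl] at h
        rw [show (⟨l+(l+1), by omega⟩ : Fin (2*l+3)) = ⟨2*l+1, by omega⟩ from
          Fin.ext (by show l+(l+1) = 2*l+1; omega)] at h
        exact h
      simp only [map_add, map_smul, LinearMap.add_apply, LinearMap.smul_apply, smul_eq_mul]
      rw [eUV, hgsym (b ⟨2*l+1, by omega⟩) (b ⟨l+1, by omega⟩), eUV,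
        hg0 (⟨l+1, by omega⟩ : Fin (2*l+3)) ⟨l+1, by omega⟩ (by simp only []; omega),
        hg0 (⟨2*l+1, by omega⟩ : Fin (2*l+3)) ⟨2*l+1, by omega⟩ (by simp only []; omega)]
      ring
    · simp only [map_add, map_smul, LinearMap.add_apply, LinearMap.smul_apply, smul_eq_mul]
      rw [hg0 (⟨0, by omega⟩ : Fin (2*l+3)) ⟨l+1, by omega⟩ (by simp only []; omega),
        hg0 (⟨0, by omega⟩ : Fin (2*l+3)) ⟨2*l+1, by omega⟩ (by simp only []; omega),
        hg0 (⟨2*l+2, by omega⟩ : Fin (2*l+3)) ⟨l+1, by omega⟩ (by simp only []; omega),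
        hg0 (⟨2*l+2, by omega⟩ : Fin (2*l+3)) ⟨2*l+1, by omega⟩ (by simp only []; omega)]
      ring
    · intro Rop hRop hsq
      have hT10 : ∀ i₃ i₄ : Fin (2*l+3),
          R ![b ⟨2*l+2, by omega⟩, b ⟨l+1, by omega⟩, b i₃, b i₄] = 0 := by
        intro i₃ i₄
        refine hvanish _ _ _ _ ?_
        rintro ⟨w₁, w₂, h1, h2, hP⟩
        simp only [] at h1
        rcases hP with hP|hP|hP|⟨a,ha2,hal,hP⟩ <;> omega
      have hT11 : ∀ i₃ i₄ : Fin (2*l+3),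
          R ![b ⟨2*l+2, by omega⟩, b ⟨2*l+1, by omega⟩, b i₃, b i₄] = 0 := by
        intro i₃ i₄
        refine hvanish _ _ _ _ ?_
        rintro ⟨w₁, w₂, h1, h2, hP⟩
        simp only [] at h1
        rcases hP with hP|hP|hP|⟨a,ha2,hal,hP⟩ <;> omega
      have hT01 : ∀ i₃ i₄ : Fin (2*l+3),
          R ![b ⟨0, by omega⟩, b ⟨2*l+1, by omega⟩, b i₃, b i₄] = 0 := by
        intro i₃ i₄
        refine hvanish _ _ _ _ ?_
        rintro ⟨w₁, w₂, h1, h2, hP⟩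
        simp only [] at h1
        rcases hP with hP|hP|hP|⟨a,ha2,hal,hP⟩ <;> omega
      have hcoef : ∀ i₃ i₄ : Fin (2*l+3),
          R ![b ⟨0, by omega⟩ + ((1-c)/2) • b ⟨2*l+2, by omega⟩,
              b ⟨l+1, by omega⟩ + ((1:ℝ)/2) • b ⟨2*l+1, by omega⟩, b i₃, b i₄]
            = R ![b ⟨0, by omega⟩, b ⟨l+1, by omega⟩, b i₃, b i₄] := by
        intro i₃ i₄
        rw [expand_ff R, hT01, hT10, hT11]
        ring
      have hc1 : ∀ i : Fin (2*l+3),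
          R ![b ⟨0, by omega⟩, b ⟨l+1, by omega⟩, b i, b ⟨0, by omega⟩] =
          if i.1 = l ∨ i.1 = l+1 ∨ i.1 = 2*l then 1 else 0 := by
        intro i
        by_cases hi : i.1 = l ∨ i.1 = l+1 ∨ i.1 = 2*l
        · rw [if_pos hi]
          rcases hi with hi|hi|hi
          · rw [show i = ⟨l, by omega⟩ from Fin.ext hi]
            exact hval4 l (by omega) le_rfl
          · rw [show i = ⟨l+1, by omega⟩ from Fin.ext hi]
            exact hval3 l (by omega) le_rfl
          · rw [show i = ⟨2*l, by omega⟩ from Fin.ext hi]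
            have h := hval5 l (by omega) le_rfl
            rw [show (⟨l+l, by omega⟩ : Fin (2*l+3)) = ⟨2*l, by omega⟩ from
              Fin.ext (by show l+l = 2*l; omega)] at h
            exact h
        · rw [if_neg hi]
          refine hvanish _ _ _ _ ?_
          rintro ⟨w₁, w₂, h1, h2, hP⟩
          simp only [] at h1 h2
          rcases hP with hP|hP|hP|⟨a,ha2,hal,hP⟩ <;> omega
      have h0' : Rop (Rop (b ⟨0, by omega⟩)) = 0 := by
        have h := congrArg (fun (T : Module.End ℝ (Fin (2*l+3) → ℝ)) => T (b ⟨0, by omega⟩)) hsq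
        simpa [pow_two, Module.End.mul_apply] using h
      have hzero : g (Rop (Rop (b ⟨0, by omega⟩))) (b ⟨0, by omega⟩) = 0 := by
        rw [h0']
        simp
      have hval : g (Rop (Rop (b ⟨0, by omega⟩))) (b ⟨0, by omega⟩) = -2 := by
        rw [hRop, mlin_expand3 R b]
        have hterm : ∀ i : Fin (2*l+3),
            b.repr (Rop (b ⟨0, by omega⟩)) i •
              R ![b ⟨0, by omega⟩ + ((1-c)/2) • b ⟨2*l+2, by omega⟩,
                  b ⟨l+1, by omega⟩ + ((1:ℝ)/2) • b ⟨2*l+1, by omega⟩, b i, b ⟨0, by omega⟩] =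
            if i.1 = l ∨ i.1 = l+1 ∨ i.1 = 2*l
              then b.repr (Rop (b ⟨0, by omega⟩)) i else 0 := by
          intro i
          rw [hcoef, hc1]
          by_cases hi : i.1 = l ∨ i.1 = l+1 ∨ i.1 = 2*l
          · rw [if_pos hi, if_pos hi, smul_eq_mul, mul_one]
          · rw [if_neg hi, if_neg hi, smul_eq_mul, mul_zero]
        rw [Finset.sum_congr rfl fun i _ => hterm i]
        rw [Finset.sum_ite, Finset.sum_const_zero, add_zero]
        have hfil : Finset.univ.filter (fun i : Fin (2*l+3) => i.1 = l ∨ i.1 = l+1 ∨ i.1 = 2*l)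
            = {(⟨l, by omega⟩ : Fin (2*l+3)), ⟨l+1, by omega⟩, ⟨2*l, by omega⟩} := by
          ext i
          simp only [Finset.mem_filter, Finset.mem_univ, true_and, Finset.mem_insert,
            Finset.mem_singleton, Fin.ext_iff]
        rw [hfil,
          Finset.sum_insert (by
            simp only [Finset.mem_insert, Finset.mem_singleton, Fin.ext_iff]; omega),
          Finset.sum_insert (by simp only [Finset.mem_singleton, Fin.ext_iff]; omega),
          Finset.sum_singleton]
        have rl : b.repr (Rop (b ⟨0, by omega⟩)) ⟨l, by omega⟩ = -1 := by
          have h := colU (Rop (b ⟨0, by omega⟩)) l (by omega) (by omega)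
          rw [hRop, hcoef, hsym2, hval5 l (by omega) le_rfl] at h
          linarith [h]
        have rl1 : b.repr (Rop (b ⟨0, by omega⟩)) ⟨l+1, by omega⟩ = 0 := by
          have h := colU (Rop (b ⟨0, by omega⟩)) (l+1) (by omega) (by omega)
          have hz : R ![b ⟨0, by omega⟩, b ⟨l+1, by omega⟩,
              b ⟨l+(l+1), by omega⟩, b ⟨0, by omega⟩] = 0 := by
            refine hvanish _ _ _ _ ?_
            rintro ⟨w₁, w₂, h1, h2, hP⟩
            simp only [] at h1 h2
            rcases hP with hP|hP|hP|⟨a,ha2,hal,hP⟩ <;> omega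
          rw [hRop, hcoef, hsym2, hz] at h
          linarith [h]
        have rl2 : b.repr (Rop (b ⟨0, by omega⟩)) ⟨2*l, by omega⟩ = -1 := by
          have h := colV (Rop (b ⟨0, by omega⟩)) l (by omega) (by omega)
          rw [show (⟨l+l, by omega⟩ : Fin (2*l+3)) = ⟨2*l, by omega⟩ from
            Fin.ext (by show l+l = 2*l; omega)] at h
          rw [hRop, hcoef, hsym2, hval4 l (by omega) le_rfl] at h
          linarith [h]
        rw [rl, rl1, rl2]
        norm_num
      rw [hval] at hzero
      norm_num at hzero
end
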